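/- arXiv:1511.04489 — 11 statements merged into one kernel-verified Lean document; each statement's English description precedes it below -/
import Mathlib

section
/- Let I ⊆ (0,∞) be an interval and let r : I → ℝ be twice differentiable and positive, K_r : I → ℝ differentiable, and K_l : I → ℝ, and let Q be a real constant. Assume the electrovacuum constraint equations hold on I: K_r(K_r + 2K_l) − (r'² + 2 r r'' − 1)/r² = Q²/r⁴ and K_r' + (r'/r)(K_r − K_l) = 0. Then, with f = r'² − (K_r r)², the identity r² · (f·r)' = (r² − Q²) · r' holds at every point of I. -/
open Set Filter Topology

/-- On an interval `I ⊆ (0,∞)`, the electrovacuum constraint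
equations imply the identity `r² · (f·r)' = (r² − Q²) · r'`, where
`f = r'² − (K_r r)²`. -/
theorem electrovacuum_constraints_imply_fr_identity
    (I : Set ℝ) (hI : I ⊆ Ioi (0 : ℝ)) (hIconn : I.OrdConnected)
    (Q : ℝ) (r r' r'' Kr Kr' Kl : ℝ → ℝ)
    (hrpos : ∀ l ∈ I, 0 < r l)
    (hr' : ∀ l ∈ I, HasDerivWithinAt r (r' l) I l)
    (hr'' : ∀ l ∈ I, HasDerivWithinAt r' (r'' l) I l)
    (hKr' : ∀ l ∈ I, HasDerivWithinAt Kr (Kr' l) I l)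
    (hham : ∀ l ∈ I, Kr l * (Kr l + 2 * Kl l)
      - ((r' l) ^ 2 + 2 * r l * r'' l - 1) / (r l) ^ 2 = Q ^ 2 / (r l) ^ 4)
    (hmom : ∀ l ∈ I, Kr' l + (r' l / r l) * (Kr l - Kl l) = 0) :
    ∀ l ∈ I, ∃ D : ℝ,
      HasDerivWithinAt (fun x => ((r' x) ^ 2 - (Kr x * r x) ^ 2) * r x) D I l ∧
      (r l) ^ 2 * D = ((r l) ^ 2 - Q ^ 2) * r' l := by
  intro l hl
  have hrne : r l ≠ 0 := (hrpos l hl).ne'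
  refine ⟨((2 * r' l ^ 1 * r'' l) - 2 * (Kr l * r l) ^ 1 * (Kr' l * r l + Kr l * r' l)) * r l
      + ((r' l) ^ 2 - (Kr l * r l) ^ 2) * r' l, ?_, ?_⟩
  · exact (((hr'' l hl).pow 2).sub (((hKr' l hl).mul (hr' l hl)).pow 2)).mul (hr' l hl)
  · have h1 := hham l hl
    have h2 := hmom l hl
    field_simp at h1 h2
    have hQ : Q ^ 2 = Kr l * (Kr l + 2 * Kl l) * (r l) ^ 4
        - ((r' l) ^ 2 + 2 * r l * r'' l - 1) * (r l) ^ 2 := by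
      apply mul_left_cancel₀ (pow_ne_zero 2 hrne)
      linear_combination (-(r l) ^ 2) * h1
    linear_combination r' l * hQ + (-2 * Kr l * (r l) ^ 4) * h2
end

section
/- Let I ⊆ (0,∞) be an interval and let r : I → ℝ be twice differentiable and positive, K_r : I → ℝ differentiable, and K_l : I → ℝ, and let Q be a real constant. Assume the electrovacuum constraint equations hold on I: K_r(K_r + 2K_l) − (r'² + 2 r r'' − 1)/r² = Q²/r⁴ and K_r' + (r'/r)(K_r − K_l) = 0. Then there exists a real constant C such that f(l) = 1 − 2C/r(l) + Q²/r(l)² for every l ∈ I, where f = r'² − (K_r r)². (This is the Birkhoff-type characterization of the electrovacuum exterior region by the two Reissner–Nordström parameters C and Q.) -/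
open Set Filter Topology

/-- Birkhoff-type theorem: On an interval `I ⊆ (0,∞)`, the
electrovacuum constraint equations imply that
`f = r'² − (K_r r)² = 1 − 2C/r + Q²/r²` for some constant `C`. -/
theorem electrovacuum_exterior_is_reissner_nordstrom
    (I : Set ℝ) (hI : I ⊆ Ioi (0 : ℝ)) (hIconn : I.OrdConnected)
    (Q : ℝ) (r r' r'' Kr Kr' Kl : ℝ → ℝ)
    (hrpos : ∀ l ∈ I, 0 < r l)
    (hr' : ∀ l ∈ I, HasDerivWithinAt r (r' l) I l)
    (hr'' : ∀ l ∈ I, HasDerivWithinAt r' (r'' l) I l)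
    (hKr' : ∀ l ∈ I, HasDerivWithinAt Kr (Kr' l) I l)
    (hham : ∀ l ∈ I, Kr l * (Kr l + 2 * Kl l)
      - ((r' l) ^ 2 + 2 * r l * r'' l - 1) / (r l) ^ 2 = Q ^ 2 / (r l) ^ 4)
    (hmom : ∀ l ∈ I, Kr' l + (r' l / r l) * (Kr l - Kl l) = 0) :
    ∃ C : ℝ, ∀ l ∈ I,
      (r' l) ^ 2 - (Kr l * r l) ^ 2 = 1 - 2 * C / r l + Q ^ 2 / (r l) ^ 2 := by
  rcases I.eq_empty_or_nonempty with hIe | ⟨l₀, hl₀⟩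
  · exact ⟨0, by simp [hIe]⟩
  set g : ℝ → ℝ := fun x =>
    (r x + -(r x * (r' x) ^ 2) + (Kr x) ^ 2 * (r x) ^ 3 + Q ^ 2 * (r x)⁻¹) / 2 with hg
  have hgderiv : ∀ l ∈ I, HasDerivWithinAt g 0 I l := by
    intro l hl
    have h1 := hr' l hl
    have h2 := hr'' l hl
    have h3 := hKr' l hl
    have hrne : r l ≠ 0 := (hrpos l hl).ne'
    have H : HasDerivWithinAt g
        ((r' l + -(r' l * (r' l) ^ 2 + r l * (2 * r' l ^ (2-1) * r'' l))
          + (2 * Kr l ^ (2-1) * Kr' l * (r l) ^ 3 + (Kr l) ^ 2 * (3 * r l ^ (3-1) * r' l))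
          + Q ^ 2 * (-(r' l) / (r l) ^ 2)) / 2) I l := by
      exact (((h1.add ((h1.mul (h2.pow 2)).neg)).add
        (((h3.pow 2).mul (h1.pow 3)))).add
        ((h1.inv hrne).const_mul (Q ^ 2))).div_const 2
    convert H using 1
    have e1 : Kr' l * r l + r' l * (Kr l - Kl l) = 0 := by
      have h := hmom l hl
      field_simp at h
      linear_combination h
    have e2 : Kr l * (Kr l + 2 * Kl l) * (r l) ^ 4
        - ((r' l) ^ 2 + 2 * r l * r'' l - 1) * (r l) ^ 2 = Q ^ 2 := by
      have h := hham l hl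
      field_simp at h
      refine mul_right_cancel₀ (pow_ne_zero 2 hrne) ?_
      linear_combination (r l) ^ 2 * h
    field_simp
    linear_combination (-(r' l)) * e2 + (-(2 * Kr l * (r l) ^ 4)) * e1
  have hconv : Convex ℝ I := hIconn.convex
  refine ⟨g l₀, ?_⟩
  intro l hl
  have hconst : g l = g l₀ := by
    have hle := hconv.norm_image_sub_le_of_norm_hasDerivWithin_le
      (f := g) (f' := fun _ => (0 : ℝ)) (C := 0)
      (fun x hx => hgderiv x hx) (fun x hx => by simp) hl₀ hl
    have h0 : ‖g l - g l₀‖ ≤ 0 := by simpa using hle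
    have heq : ‖g l - g l₀‖ = 0 := le_antisymm h0 (norm_nonneg _)
    exact sub_eq_zero.mp (norm_eq_zero.mp heq)
  have hrne : r l ≠ 0 := (hrpos l hl).ne'
  rw [← hconst]
  have hgl : g l = (r l + -(r l * (r' l) ^ 2) + (Kr l) ^ 2 * (r l) ^ 3 + Q ^ 2 * (r l)⁻¹) / 2 :=
    rfl
  rw [hgl]
  field_simp
  ring
end

section
/- Let l₀ > 0 and let r : [l₀,∞) → ℝ be twice differentiable and positive, K_r : [l₀,∞) → ℝ differentiable, K_l : [l₀,∞) → ℝ, and Q a real constant, such that the electrovacuum constraint equations K_r(K_r + 2K_l) − (r'² + 2 r r'' − 1)/r² = Q²/r⁴ and K_r' + (r'/r)(K_r − K_l) = 0 hold on [l₀,∞). Assume the asymptotic flatness conditions lim_{l→∞} r(l) = ∞, lim_{l→∞} r'(l) = 1 and lim_{l→∞} r(l)K_r(l) = 0. Then there exists a real constant M (the ADM mass) such that the Misner–Sharp energy satisfies 𝓔(l) = M − Q²/(2 r(l)) for every l ≥ l₀, and lim_{l→∞} 𝓔(l) = M. -/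
open Set Filter Topology

/-- For an asymptotically flat electrovacuum exterior region
`[l₀,∞)` there exists a constant `M` (the ADM mass) such that the
Misner–Sharp energy `𝓔 = (r/2)(1 − f)` satisfies `𝓔 = M − Q²/(2r)` on the
whole exterior region, and `𝓔 → M` at infinity. -/
theorem misner_sharp_energy_of_electrovacuum_exterior
    (l₀ : ℝ) (hl₀ : 0 < l₀) (Q : ℝ) (r r' r'' Kr Kr' Kl : ℝ → ℝ)
    (hrpos : ∀ l ∈ Ici l₀, 0 < r l)
    (hr' : ∀ l ∈ Ici l₀, HasDerivWithinAt r (r' l) (Ici l₀) l)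
    (hr'' : ∀ l ∈ Ici l₀, HasDerivWithinAt r' (r'' l) (Ici l₀) l)
    (hKr' : ∀ l ∈ Ici l₀, HasDerivWithinAt Kr (Kr' l) (Ici l₀) l)
    (hham : ∀ l ∈ Ici l₀, Kr l * (Kr l + 2 * Kl l)
      - ((r' l) ^ 2 + 2 * r l * r'' l - 1) / (r l) ^ 2 = Q ^ 2 / (r l) ^ 4)
    (hmom : ∀ l ∈ Ici l₀, Kr' l + (r' l / r l) * (Kr l - Kl l) = 0)
    (hrlim : Tendsto r atTop atTop)
    (hr'lim : Tendsto r' atTop (𝓝 1))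
    (hrKrlim : Tendsto (fun l => r l * Kr l) atTop (𝓝 0)) :
    ∃ M : ℝ,
      (∀ l ∈ Ici l₀,
        r l / 2 * (1 - ((r' l) ^ 2 - (Kr l * r l) ^ 2)) = M - Q ^ 2 / (2 * r l)) ∧
      Tendsto (fun l => r l / 2 * (1 - ((r' l) ^ 2 - (Kr l * r l) ^ 2)))
        atTop (𝓝 M) := by
  set g : ℝ → ℝ := fun l =>
    r l / 2 * (1 - ((r' l) ^ 2 - (Kr l * r l) ^ 2)) + Q ^ 2 / (2 * r l) with hgdef
  -- g has derivative 0 on Ici l₀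
  have key : ∀ l ∈ Ici l₀, HasDerivWithinAt g 0 (Ici l₀) l := by
    intro l hl
    have hrne : r l ≠ 0 := (hrpos l hl).ne'
    have h1 := hr' l hl
    have h2 := hr'' l hl
    have h3 := hKr' l hl
    have hKrr : HasDerivWithinAt (fun l => Kr l * r l)
        (Kr' l * r l + Kr l * r' l) (Ici l₀) l := h3.mul h1
    have hin : HasDerivWithinAt (fun l => 1 - ((r' l) ^ 2 - (Kr l * r l) ^ 2))
        (0 - ((2:ℕ) * (r' l) ^ 1 * r'' l
          - (2:ℕ) * (Kr l * r l) ^ 1 * (Kr' l * r l + Kr l * r' l))) (Ici l₀) l :=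
      (hasDerivWithinAt_const l (Ici l₀) 1).sub ((h2.pow 2).sub (hKrr.pow 2))
    have hE : HasDerivWithinAt
        (fun l => r l / 2 * (1 - ((r' l) ^ 2 - (Kr l * r l) ^ 2)))
        (r' l / 2 * (1 - ((r' l) ^ 2 - (Kr l * r l) ^ 2))
          + r l / 2 * (0 - ((2:ℕ) * (r' l) ^ 1 * r'' l
            - (2:ℕ) * (Kr l * r l) ^ 1 * (Kr' l * r l + Kr l * r' l))))
        (Ici l₀) l := (h1.div_const 2).mul hin
    have h2rne : (2 : ℝ) * r l ≠ 0 := by positivity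
    have hinv : HasDerivWithinAt (fun l => Q ^ 2 / (2 * r l))
        ((0 * (2 * r l) - Q ^ 2 * (2 * r' l)) / (2 * r l) ^ 2) (Ici l₀) l :=
      (hasDerivWithinAt_const l (Ici l₀) (Q ^ 2)).div (h1.const_mul 2) h2rne
    have htot := hE.add hinv
    have ham := hham l hl
    have mom := hmom l hl
    have hmom' : Kr' l * r l + r' l * (Kr l - Kl l) = 0 := by
      field_simp at mom; linarith
    have h4 : (r l) ^ 2 ≠ 0 := pow_ne_zero 2 hrne
    have hham' : (Kr l * (Kr l + 2 * Kl l)) * (r l) ^ 4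
        - ((r' l) ^ 2 + 2 * r l * r'' l - 1) * (r l) ^ 2 = Q ^ 2 := by
      field_simp at ham
      have h5 : ((Kr l * (Kr l + 2 * Kl l)) * (r l) ^ 4
          - ((r' l) ^ 2 + 2 * r l * r'' l - 1) * (r l) ^ 2 - Q ^ 2) * (r l) ^ 2 = 0 := by
        linear_combination (r l) ^ 2 * ham
      have := (mul_eq_zero.mp h5).resolve_right h4
      linarith
    have hzero : r' l / 2 * (1 - ((r' l) ^ 2 - (Kr l * r l) ^ 2))
          + r l / 2 * (0 - ((2:ℕ) * (r' l) ^ 1 * r'' l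
            - (2:ℕ) * (Kr l * r l) ^ 1 * (Kr' l * r l + Kr l * r' l)))
          + (0 * (2 * r l) - Q ^ 2 * (2 * r' l)) / (2 * r l) ^ 2 = 0 := by
      push_cast
      field_simp
      linear_combination (r' l) * hham' + (2 * Kr l * (r l) ^ 4) * hmom'
    rw [hzero] at htot
    exact htot
  -- g is constant on Ici l₀
  have hconst : ∀ l ∈ Ici l₀, g l = g l₀ := by
    intro l hl
    have hcont : ContinuousOn g (Icc l₀ l) := fun x hx =>
      ((key x (Icc_subset_Ici_self hx)).continuousWithinAt).mono Icc_subset_Ici_self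
    have hderiv : ∀ x ∈ Ico l₀ l, HasDerivWithinAt g 0 (Ici x) x := fun x hx =>
      (key x (Ico_subset_Ici_self hx)).mono (Ici_subset_Ici.mpr hx.1)
    exact constant_of_has_deriv_right_zero hcont hderiv l (right_mem_Icc.mpr hl)
  refine ⟨g l₀, ?_, ?_⟩
  · intro l hl
    have h := hconst l hl
    simp only [hgdef] at h ⊢
    linarith
  · have heq : ∀ᶠ l in atTop, r l / 2 * (1 - ((r' l) ^ 2 - (Kr l * r l) ^ 2))
        = g l₀ - Q ^ 2 / (2 * r l) := by
      filter_upwards [eventually_ge_atTop l₀] with l hl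
      have h := hconst l hl
      simp only [hgdef] at h ⊢
      linarith
    have hlim : Tendsto (fun l => g l₀ - Q ^ 2 / (2 * r l)) atTop (𝓝 (g l₀ - 0)) := by
      refine Tendsto.sub tendsto_const_nhds ?_
      have : Tendsto (fun l => 2 * r l) atTop atTop :=
        hrlim.const_mul_atTop (by norm_num)
      simpa using Tendsto.div_atTop (tendsto_const_nhds) this
    have hlim' : Tendsto (fun l => g l₀ - Q ^ 2 / (2 * r l)) atTop (𝓝 (g l₀)) := by
      simpa using hlim
    exact Tendsto.congr' (EventuallyEq.symm heq) hlim'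
end

section
/- Let I ⊆ (0,∞) be an interval and let r : I → ℝ be twice differentiable and positive, K_r : I → ℝ differentiable, and K_l, μ, j : I → ℝ, satisfying the Hamiltonian constraint K_r(K_r + 2K_l) − (r'² + 2 r r'' − 1)/r² = 8π μ and the momentum constraint K_r' + (r'/r)(K_r − K_l) = 4π j on I. Then the Misner–Sharp energy 𝓔 = (r/2)(1 − r'² + (K_r r)²) is differentiable on I and its derivative satisfies 𝓔' = 4π r² ( μ r' + j r K_r ) at every point of I. -/
open Set Filter Topology

/-- On an interval `I ⊆ (0,∞)`, the Hamiltonian and momentum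
constraints imply that the Misner–Sharp energy
`𝓔 = (r/2)(1 − r'² + (K_r r)²)` is differentiable with
`𝓔' = 4π r² (μ r' + j r K_r)`. -/
theorem misner_sharp_energy_derivative
    (I : Set ℝ) (hI : I ⊆ Ioi (0 : ℝ)) (hIconn : I.OrdConnected)
    (r r' r'' Kr Kr' Kl μ j : ℝ → ℝ)
    (hrpos : ∀ l ∈ I, 0 < r l)
    (hr' : ∀ l ∈ I, HasDerivWithinAt r (r' l) I l)
    (hr'' : ∀ l ∈ I, HasDerivWithinAt r' (r'' l) I l)
    (hKr' : ∀ l ∈ I, HasDerivWithinAt Kr (Kr' l) I l)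
    (hham : ∀ l ∈ I, Kr l * (Kr l + 2 * Kl l)
      - ((r' l) ^ 2 + 2 * r l * r'' l - 1) / (r l) ^ 2 = 8 * Real.pi * μ l)
    (hmom : ∀ l ∈ I, Kr' l + (r' l / r l) * (Kr l - Kl l) = 4 * Real.pi * j l) :
    ∀ l ∈ I, HasDerivWithinAt
      (fun x => r x / 2 * (1 - (r' x) ^ 2 + (Kr x * r x) ^ 2))
      (4 * Real.pi * (r l) ^ 2 * (μ l * r' l + j l * r l * Kr l)) I l := by
  intro l hl
  have hr0 : r l ≠ 0 := ne_of_gt (hrpos l hl)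
  have A := hr' l hl
  have B := hr'' l hl
  have C := hKr' l hl
  have H : HasDerivWithinAt
      (fun x => r x / 2 * (1 - (r' x) ^ 2 + (Kr x * r x) ^ 2))
      (r' l / 2 * (1 - (r' l) ^ 2 + (Kr l * r l) ^ 2)
        + r l / 2 * ((0 - 2 * r' l ^ 1 * r'' l)
          + 2 * (Kr l * r l) ^ 1 * (Kr' l * r l + Kr l * r' l))) I l :=
    (A.div_const 2).mul
      (((hasDerivWithinAt_const l I (1 : ℝ)).sub (B.pow 2)).add ((C.mul A).pow 2))
  convert H using 1
  have h1 := hham l hl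
  have h2 := hmom l hl
  have hμ : 8 * Real.pi * μ l * (r l) ^ 2
      = Kr l * (Kr l + 2 * Kl l) * (r l) ^ 2 - ((r' l) ^ 2 + 2 * r l * r'' l - 1) := by
    field_simp at h1 ⊢
    linarith [h1]
  have hj : 4 * Real.pi * j l * r l = Kr' l * r l + r' l * (Kr l - Kl l) := by
    field_simp at h2 ⊢
    linarith [h2]
  have e1 : 4 * Real.pi * (r l) ^ 2 * (μ l * r' l + j l * r l * Kr l)
      = (8 * Real.pi * μ l * (r l) ^ 2) * r' l / 2
        + (4 * Real.pi * j l * r l) * (r l ^ 2 * Kr l) := by ring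
  rw [e1, hμ, hj]; ring
end

section
/- Let 0 < l₁ ≤ l₂ and let r : [l₁,l₂] → ℝ be twice differentiable and positive, K_r : [l₁,l₂] → ℝ differentiable, and K_l, μ, j : [l₁,l₂] → ℝ, satisfying the Hamiltonian constraint K_r(K_r + 2K_l) − (r'² + 2 r r'' − 1)/r² = 8π μ and the momentum constraint K_r' + (r'/r)(K_r − K_l) = 4π j on [l₁,l₂]. Assume the dominant energy condition μ ≥ |j| holds on [l₁,l₂], and that θ⁺ > 0 and θ⁻ > 0 on [l₁,l₂], i.e. r' + K_r r > 0 and r' − K_r r > 0. Then the Misner–Sharp energy is monotone: 𝓔(l₁) ≤ 𝓔(l₂). -/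
open Set Filter Topology

/-- monotonicity of the Misner–Sharp energy: On an untrapped
region `[l₁,l₂]` (`θ⁺ > 0` and `θ⁻ > 0`) on which the constraint equations
and the dominant energy condition `μ ≥ |j|` hold, the Misner–Sharp energy
`𝓔 = (r/2)(1 − r'² + (K_r r)²)` is monotone: `𝓔(l₁) ≤ 𝓔(l₂)`. -/
theorem misner_sharp_energy_monotone
    (l₁ l₂ : ℝ) (hl₁ : 0 < l₁) (hl₁₂ : l₁ ≤ l₂)
    (r r' r'' Kr Kr' Kl μ j : ℝ → ℝ)
    (hrpos : ∀ l ∈ Icc l₁ l₂, 0 < r l)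
    (hr' : ∀ l ∈ Icc l₁ l₂, HasDerivWithinAt r (r' l) (Icc l₁ l₂) l)
    (hr'' : ∀ l ∈ Icc l₁ l₂, HasDerivWithinAt r' (r'' l) (Icc l₁ l₂) l)
    (hKr' : ∀ l ∈ Icc l₁ l₂, HasDerivWithinAt Kr (Kr' l) (Icc l₁ l₂) l)
    (hham : ∀ l ∈ Icc l₁ l₂, Kr l * (Kr l + 2 * Kl l)
      - ((r' l) ^ 2 + 2 * r l * r'' l - 1) / (r l) ^ 2 = 8 * Real.pi * μ l)
    (hmom : ∀ l ∈ Icc l₁ l₂,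
      Kr' l + (r' l / r l) * (Kr l - Kl l) = 4 * Real.pi * j l)
    (hDEC : ∀ l ∈ Icc l₁ l₂, |j l| ≤ μ l)
    (hθp : ∀ l ∈ Icc l₁ l₂, 0 < r' l + Kr l * r l)
    (hθm : ∀ l ∈ Icc l₁ l₂, 0 < r' l - Kr l * r l) :
    r l₁ / 2 * (1 - (r' l₁) ^ 2 + (Kr l₁ * r l₁) ^ 2) ≤
      r l₂ / 2 * (1 - (r' l₂) ^ 2 + (Kr l₂ * r l₂) ^ 2) := by
  set s : Set ℝ := Icc l₁ l₂ with hs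
  set F : ℝ → ℝ := fun l => r l / 2 * (1 - r' l ^ 2 + (Kr l * r l) ^ 2) with hF
  set E : ℝ → ℝ := fun l =>
    4 * Real.pi * (r l) ^ 2 * (μ l * r' l + j l * (Kr l * r l)) with hE
  -- derivative of F within s
  have hFderiv : ∀ l ∈ s, HasDerivWithinAt F (E l) s l := by
    intro l hl
    have hrl := hrpos l hl
    have hrne : r l ≠ 0 := ne_of_gt hrl
    have h1 : HasDerivWithinAt (fun x => 1 - r' x ^ 2 + (Kr x * r x) ^ 2)
        (-(2 * r' l * r'' l) + 2 * (Kr l * r l) * (Kr' l * r l + Kr l * r' l)) s l := by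
      have ha : HasDerivWithinAt (fun x => 1 - r' x ^ 2) (-(2 * r' l * r'' l)) s l := by
        have := ((hr'' l hl).pow 2)
        simpa [mul_comm, mul_assoc, mul_left_comm] using
          (hasDerivWithinAt_const l s (1 : ℝ)).fun_sub ((hr'' l hl).fun_pow 2)
      have hb : HasDerivWithinAt (fun x => (Kr x * r x) ^ 2)
          (2 * (Kr l * r l) * (Kr' l * r l + Kr l * r' l)) s l := by
        have := ((hKr' l hl).fun_mul (hr' l hl)).fun_pow 2
        simpa [mul_comm, mul_assoc, mul_left_comm] using this
      simpa using ha.fun_add hb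
    have h2 : HasDerivWithinAt F
        (r' l / 2 * (1 - r' l ^ 2 + (Kr l * r l) ^ 2) +
          r l / 2 * (-(2 * r' l * r'' l) + 2 * (Kr l * r l) * (Kr' l * r l + Kr l * r' l)))
        s l := ((hr' l hl).div_const 2).mul h1
    convert h2 using 1
    -- use the constraints to identify the derivative
    have hham' : Kr l * (Kr l + 2 * Kl l) * r l ^ 2 - (r' l ^ 2 + 2 * r l * r'' l - 1)
        = 8 * Real.pi * μ l * r l ^ 2 := by
      have := hham l hl
      field_simp at this
      linarith [this]
    have hmom' : Kr' l * r l + r' l * (Kr l - Kl l) = 4 * Real.pi * j l * r l := by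
      have := hmom l hl
      field_simp at this
      linarith [this]
    simp only [hE]
    linear_combination (-(r' l) / 2) * hham' + (-(Kr l * r l ^ 2)) * hmom'
  -- the derivative is nonnegative
  have hEnonneg : ∀ l ∈ s, 0 ≤ E l := by
    intro l hl
    have hj := hDEC l hl
    have hp := hθp l hl
    have hm := hθm l hl
    have ha1 : -|j l| ≤ j l := neg_abs_le _
    have ha2 : j l ≤ |j l| := le_abs_self _
    have ha0 : (0:ℝ) ≤ |j l| := abs_nonneg _
    have hfac : 0 ≤ μ l * r' l + j l * (Kr l * r l) := by
      nlinarith [mul_nonneg (by linarith : (0:ℝ) ≤ |j l| - j l) (by linarith : (0:ℝ) ≤ r' l - Kr l * r l),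
        mul_nonneg (by linarith : (0:ℝ) ≤ |j l| + j l) (by linarith : (0:ℝ) ≤ r' l + Kr l * r l),
        mul_nonneg (by linarith : (0:ℝ) ≤ μ l - |j l|) (by linarith : (0:ℝ) ≤ r' l)]
    have : (0:ℝ) ≤ 4 * Real.pi * (r l) ^ 2 :=
      mul_nonneg (by positivity) (sq_nonneg _)
    exact mul_nonneg this hfac
  -- monotonicity
  have hmono : MonotoneOn F s := by
    apply monotoneOn_of_hasDerivWithinAt_nonneg (convex_Icc l₁ l₂)
      (fun l hl => (hFderiv l hl).continuousWithinAt) (f' := E)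
    · intro x hx
      exact (hFderiv x (interior_subset hx)).mono interior_subset
    · intro x hx
      exact hEnonneg x (interior_subset hx)
  have h1 : l₁ ∈ s := by simp [hs, hl₁₂]
  have h2 : l₂ ∈ s := by simp [hs, hl₁₂]
  exact hmono h1 h2 hl₁₂
end

section
/- (Non-negativity of the Misner–Sharp energy of a regular ball.) Let l₀ > 0, let r : [0,l₀] → ℝ be twice differentiable with r(0) = 0, continuous first derivative, r'(0) = 1, and r(l) > 0 for 0 < l ≤ l₀; let K_r : [0,l₀] → ℝ be differentiable and continuous at 0, and K_l, μ, j : (0,l₀] → ℝ, such that the Hamiltonian constraint K_r(K_r + 2K_l) − (r'² + 2 r r'' − 1)/r² = 8π μ and the momentum constraint K_r' + (r'/r)(K_r − K_l) = 4π j hold on (0,l₀]. Assume the dominant energy condition μ ≥ |j| holds on (0,l₀], and that both null expansions are positive at the boundary: r'(l₀) + K_r(l₀) r(l₀) > 0 and r'(l₀) − K_r(l₀) r(l₀) > 0. Then the Misner–Sharp energy of the boundary is non-negative: 𝓔(l₀) ≥ 0. -/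
open Set Filter Topology

/-- Misner–Sharp energy expressed in terms of `r`, `r'`, `Kr`. -/
noncomputable def msEnergy (r r' Kr : ℝ → ℝ) (l : ℝ) : ℝ :=
  r l / 2 * (1 - (r' l) ^ 2 + (Kr l * r l) ^ 2)

/-- Lemma 1, non-negativity of the Misner–Sharp energy of a
regular ball: if the constraint equations and the dominant energy condition
hold on a regular ball `[0,l₀]` and both null expansions are positive at the
boundary, then the Misner–Sharp energy of the boundary is non-negative. -/
theorem misner_sharp_energy_of_regular_ball_nonneg
    (l₀ : ℝ) (hl₀ : 0 < l₀) (r r' r'' Kr Kr' Kl μ j : ℝ → ℝ)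
    (hr0 : r 0 = 0) (hr'0 : r' 0 = 1)
    (hrpos : ∀ l ∈ Ioc 0 l₀, 0 < r l)
    (hr' : ∀ l ∈ Icc 0 l₀, HasDerivWithinAt r (r' l) (Icc 0 l₀) l)
    (hr'cont : ContinuousOn r' (Icc 0 l₀))
    (hr'' : ∀ l ∈ Ioc 0 l₀, HasDerivWithinAt r' (r'' l) (Icc 0 l₀) l)
    (hKr' : ∀ l ∈ Ioc 0 l₀, HasDerivWithinAt Kr (Kr' l) (Icc 0 l₀) l)
    (hKrcont0 : ContinuousWithinAt Kr (Icc 0 l₀) 0)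
    (hham : ∀ l ∈ Ioc 0 l₀, Kr l * (Kr l + 2 * Kl l)
      - ((r' l) ^ 2 + 2 * r l * r'' l - 1) / (r l) ^ 2 = 8 * Real.pi * μ l)
    (hmom : ∀ l ∈ Ioc 0 l₀,
      Kr' l + (r' l / r l) * (Kr l - Kl l) = 4 * Real.pi * j l)
    (hDEC : ∀ l ∈ Ioc 0 l₀, |j l| ≤ μ l)
    (hθp : 0 < r' l₀ + Kr l₀ * r l₀)
    (hθm : 0 < r' l₀ - Kr l₀ * r l₀) :
    0 ≤ r l₀ / 2 * (1 - (r' l₀) ^ 2 + (Kr l₀ * r l₀) ^ 2) := by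
  show 0 ≤ msEnergy r r' Kr l₀
  set E : ℝ → ℝ := msEnergy r r' Kr with hEdef
  have hsub : Ioc 0 l₀ ⊆ Icc 0 l₀ := Ioc_subset_Icc_self
  -- continuity facts
  have hrc : ContinuousOn r (Icc 0 l₀) := fun x hx => (hr' x hx).continuousWithinAt
  have hKrc : ContinuousOn Kr (Icc 0 l₀) := by
    intro x hx
    rcases eq_or_lt_of_le hx.1 with h0 | h0
    · rw [← h0]; exact hKrcont0
    · exact (hKr' x ⟨h0, hx.2⟩).continuousWithinAt
  have hEc : ContinuousOn E (Icc 0 l₀) := by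
    have : ContinuousOn (fun l => r l / 2 * (1 - (r' l) ^ 2 + (Kr l * r l) ^ 2))
        (Icc 0 l₀) :=
      (hrc.div_const 2).mul
        ((continuousOn_const.sub (hr'cont.pow 2)).add ((hKrc.mul hrc).pow 2))
    exact this
  -- derivative of the energy on (0, l₀]
  have hE' : ∀ x ∈ Ioc 0 l₀, HasDerivWithinAt E
      (4 * Real.pi * (r x) ^ 2 * (μ x * r' x + j x * (Kr x * r x))) (Icc 0 l₀) x := by
    intro x hx
    have hx' : x ∈ Icc 0 l₀ := hsub hx
    have hrx : (0:ℝ) < r x := hrpos x hx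
    have hne : r x ≠ 0 := ne_of_gt hrx
    have h1 : Kr x * (Kr x + 2 * Kl x) * (r x) ^ 2
        - ((r' x) ^ 2 + 2 * r x * r'' x - 1) = 8 * Real.pi * μ x * (r x) ^ 2 := by
      have h := hham x hx
      field_simp at h
      linear_combination h
    have h2 : Kr' x * r x + r' x * (Kr x - Kl x) = 4 * Real.pi * j x * r x := by
      have h := hmom x hx
      field_simp at h
      linear_combination h
    have hR := hr' x hx'
    have hR' := hr'' x hx
    have hK := hKr' x hx
    have hcomb : HasDerivWithinAt
        (fun l => r l / 2 * (1 - r' l * r' l + Kr l * r l * (Kr l * r l)))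
        (r' x / 2 * (1 - r' x * r' x + Kr x * r x * (Kr x * r x))
          + r x / 2 * ((0 - (r'' x * r' x + r' x * r'' x))
            + ((Kr' x * r x + Kr x * r' x) * (Kr x * r x)
              + Kr x * r x * (Kr' x * r x + Kr x * r' x)))) (Icc 0 l₀) x :=
      (hR.div_const 2).mul
        (((hasDerivWithinAt_const x (Icc 0 l₀) (1:ℝ)).sub (hR'.mul hR')).add
          ((hK.mul hR).mul (hK.mul hR)))
    have hTD : 4 * Real.pi * (r x) ^ 2 * (μ x * r' x + j x * (Kr x * r x))
        = r' x / 2 * (1 - r' x * r' x + Kr x * r x * (Kr x * r x))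
          + r x / 2 * ((0 - (r'' x * r' x + r' x * r'' x))
            + ((Kr' x * r x + Kr x * r' x) * (Kr x * r x)
              + Kr x * r x * (Kr' x * r x + Kr x * r' x))) := by
      linear_combination (-(r' x) / 2) * h1 + (-(Kr x) * (r x) ^ 2) * h2
    have hfun : (fun l => r l / 2 * (1 - (r' l) ^ 2 + (Kr l * r l) ^ 2))
        = (fun l => r l / 2 * (1 - r' l * r' l + Kr l * r l * (Kr l * r l))) := by
      funext l; ring
    have hgoal : HasDerivWithinAt
        (fun l => r l / 2 * (1 - (r' l) ^ 2 + (Kr l * r l) ^ 2))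
        (4 * Real.pi * (r x) ^ 2 * (μ x * r' x + j x * (Kr x * r x))) (Icc 0 l₀) x := by
      rw [hfun, hTD]
      exact hcomb
    exact hgoal
  -- the main monotonicity step
  have main : ∀ a, 0 ≤ a → a < l₀ →
      (∀ x ∈ Ioo a l₀, 0 < r' x + Kr x * r x ∧ 0 < r' x - Kr x * r x) →
      E a ≤ E l₀ := by
    intro a ha0 hal hpos
    have hIcc : Icc a l₀ ⊆ Icc 0 l₀ := Icc_subset_Icc ha0 le_rfl
    have hmem : ∀ x ∈ Ioo a l₀, x ∈ Ioc 0 l₀ := fun x hx =>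
      ⟨lt_of_le_of_lt ha0 hx.1, hx.2.le⟩
    have hder : ∀ x ∈ Ioo a l₀, HasDerivAt E
        (4 * Real.pi * (r x) ^ 2 * (μ x * r' x + j x * (Kr x * r x))) x := by
      intro x hx
      exact (hE' x (hmem x hx)).hasDerivAt
        (Icc_mem_nhds (lt_of_le_of_lt ha0 hx.1) hx.2)
    have hmono : MonotoneOn E (Icc a l₀) := by
      apply monotoneOn_of_deriv_nonneg (convex_Icc a l₀) (hEc.mono hIcc)
      · intro x hx
        rw [interior_Icc] at hx
        exact (hder x hx).differentiableAt.differentiableWithinAt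
      · intro x hx
        rw [interior_Icc] at hx
        rw [(hder x hx).deriv]
        obtain ⟨hp, hm⟩ := hpos x hx
        have hμ : |j x| ≤ μ x := hDEC x (hmem x hx)
        have h0μ : 0 ≤ μ x := le_trans (abs_nonneg _) hμ
        have hb : |Kr x * r x| ≤ r' x := by
          rw [abs_le]; constructor <;> linarith
        have h1 : |j x * (Kr x * r x)| ≤ μ x * r' x := by
          rw [abs_mul]
          exact mul_le_mul hμ hb (abs_nonneg _) h0μ
        have h2 : -(μ x * r' x) ≤ j x * (Kr x * r x) := by
          have := neg_abs_le (j x * (Kr x * r x))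
          linarith
        have h3 : 0 ≤ μ x * r' x + j x * (Kr x * r x) := by linarith
        have h4 : (0:ℝ) ≤ 4 * Real.pi * (r x) ^ 2 := by positivity
        exact mul_nonneg h4 h3
    exact hmono (left_mem_Icc.2 hal.le) (right_mem_Icc.2 hal.le) hal.le
  by_cases hA : ∃ l ∈ Icc 0 l₀,
      min (r' l + Kr l * r l) (r' l - Kr l * r l) ≤ 0
  · -- there is a point where one expansion is nonpositive; take the last such point
    set g : ℝ → ℝ := fun l => min (r' l + Kr l * r l) (r' l - Kr l * r l) with hgdef
    have hgc : ContinuousOn g (Icc 0 l₀) :=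
      (hr'cont.add (hKrc.mul hrc)).inf (hr'cont.sub (hKrc.mul hrc))
    set A : Set ℝ := Icc 0 l₀ ∩ g ⁻¹' Iic 0 with hAdef
    have hAclosed : IsClosed A :=
      hgc.preimage_isClosed_of_isClosed isClosed_Icc isClosed_Iic
    have hAne : A.Nonempty := by
      obtain ⟨l, hl, hle⟩ := hA
      exact ⟨l, hl, hle⟩
    have hAbdd : BddAbove A := ⟨l₀, fun y hy => hy.1.2⟩
    set l₁ : ℝ := sSup A with hl₁def
    have hl₁A : l₁ ∈ A := hAclosed.csSup_mem hAne hAbdd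
    have hl₁Icc : l₁ ∈ Icc 0 l₀ := hl₁A.1
    have hgl₁ : g l₁ ≤ 0 := hl₁A.2
    have hl₁lt : l₁ < l₀ := by
      rcases lt_or_eq_of_le hl₁Icc.2 with h | h
      · exact h
      · exfalso
        have : 0 < g l₀ := lt_min hθp hθm
        rw [h] at hgl₁; linarith
    have hl₁pos : 0 < l₁ := by
      rcases lt_or_eq_of_le hl₁Icc.1 with h | h
      · exact h
      · exfalso
        have hg0 : g 0 = 1 := by
          simp only [hgdef, hr0, hr'0, mul_zero, add_zero, sub_zero, min_self]
        rw [← h] at hgl₁; rw [hg0] at hgl₁; linarith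
    have hpos : ∀ x ∈ Ioo l₁ l₀, 0 < r' x + Kr x * r x ∧ 0 < r' x - Kr x * r x := by
      intro x hx
      have hxIcc : x ∈ Icc 0 l₀ := ⟨le_of_lt (lt_of_le_of_lt hl₁Icc.1 hx.1), hx.2.le⟩
      have hxA : x ∉ A := by
        intro hxA
        exact absurd (le_csSup hAbdd hxA) (not_le.2 hx.1)
      have hgx : 0 < g x := by
        by_contra h
        exact hxA ⟨hxIcc, not_lt.1 h⟩
      exact ⟨lt_of_lt_of_le hgx (min_le_left _ _), lt_of_lt_of_le hgx (min_le_right _ _)⟩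
    -- the expansions vanish (one of them) at l₁, so the energy there is r l₁ / 2 ≥ 0
    have hg0' : 0 ≤ g l₁ := by
      have hcw : ContinuousWithinAt g (Icc 0 l₀) l₁ := hgc l₁ hl₁Icc
      have hmonoF : 𝓝[Ioo l₁ l₀] l₁ ≤ 𝓝[Icc 0 l₀] l₁ :=
        nhdsWithin_mono l₁ (fun y hy => ⟨le_of_lt (lt_of_le_of_lt hl₁Icc.1 hy.1), hy.2.le⟩)
      have ht : Tendsto g (𝓝[Ioo l₁ l₀] l₁) (𝓝 (g l₁)) := hcw.tendsto.mono_left hmonoF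
      haveI := left_nhdsWithin_Ioo_neBot hl₁lt
      refine ge_of_tendsto ht ?_
      filter_upwards [eventually_mem_nhdsWithin] with y hy
      exact (lt_min (hpos y hy).1 (hpos y hy).2).le
    have hgeq : g l₁ = 0 := le_antisymm hgl₁ hg0'
    have hgeq2 : min (r' l₁ + Kr l₁ * r l₁) (r' l₁ - Kr l₁ * r l₁) = 0 := hgeq
    have hab : (r' l₁ + Kr l₁ * r l₁) * (r' l₁ - Kr l₁ * r l₁) = 0 := by
      rcases le_total (r' l₁ + Kr l₁ * r l₁) (r' l₁ - Kr l₁ * r l₁) with h | h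
      · rw [(min_eq_left h).symm.trans hgeq2, zero_mul]
      · rw [(min_eq_right h).symm.trans hgeq2, mul_zero]
    have hEl₁ : 0 ≤ E l₁ := by
      have hrl₁ : 0 < r l₁ := hrpos l₁ ⟨hl₁pos, hl₁Icc.2⟩
      show 0 ≤ r l₁ / 2 * (1 - (r' l₁) ^ 2 + (Kr l₁ * r l₁) ^ 2)
      nlinarith [hab, hrl₁]
    exact le_trans hEl₁ (main l₁ hl₁pos.le hl₁lt hpos)
  · -- both expansions positive everywhere
    push_neg at hA
    have hE0 : E 0 = 0 := by
      show r 0 / 2 * (1 - (r' 0) ^ 2 + (Kr 0 * r 0) ^ 2) = 0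
      rw [hr0]; ring
    have hpos : ∀ x ∈ Ioo 0 l₀, 0 < r' x + Kr x * r x ∧ 0 < r' x - Kr x * r x := by
      intro x hx
      have := hA x ⟨hx.1.le, hx.2.le⟩
      exact ⟨lt_of_lt_of_le this (min_le_left _ _), lt_of_lt_of_le this (min_le_right _ _)⟩
    have := main 0 le_rfl hl₀ hpos
    linarith [hE0 ▸ this]
end

section
/- (Main theorem, part (i): size–charge inequality for bodies.) Let l₀ > 0 and Q ≠ 0 a real constant. Let r : [0,∞) → ℝ be twice differentiable with r(0) = 0, continuous first derivative, r'(0) = 1 and r(l) > 0 for all l > 0; let K_r : [0,∞) → ℝ be differentiable and continuous at 0, and K_l, μ, j : (0,∞) → ℝ, such that the Hamiltonian constraint K_r(K_r + 2K_l) − (r'² + 2 r r'' − 1)/r² = 8π μ and the momentum constraint K_r' + (r'/r)(K_r − K_l) = 4π j hold on (0,∞). Assume: (1) the dominant energy condition μ ≥ |j| on (0,l₀] (the ball 𝓑); (2) electrovacuum exterior: μ = Q²/(8π r⁴) and j = 0 on [l₀,∞); (3) asymptotic flatness: lim_{l→∞} r(l) = ∞, lim_{l→∞} r'(l) = 1,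 lim_{l→∞} r(l)K_r(l) = 0; (4) the exterior region is untrapped: f(l) = r'(l)² − (K_r(l) r(l))² > 0 for all l ≥ l₀. Then the areal radius 𝓡 = r(l₀) of the ball satisfies the strict inequality 2𝓡 > |Q|. -/
open Set Filter Topology

/-- If a continuous function on `Ici 0` never vanishes on `Ioi a` (with `a ≥ 0`)
and tends to `1` at infinity, it is positive on `Ioi a`. -/
lemma aux_pos_of_ne_zero_tendsto (g : ℝ → ℝ) (a : ℝ) (ha : 0 ≤ a)
    (hg : ContinuousOn g (Ici 0))
    (hne : ∀ x ∈ Ioi a, g x ≠ 0) (hlim : Filter.Tendsto g atTop (𝓝 1)) :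
    ∀ x ∈ Ioi a, 0 < g x := by
  intro x hx
  by_contra hle
  push_neg at hle
  obtain ⟨y, hy1, hy2⟩ := ((hlim.eventually (eventually_gt_nhds (by norm_num : (0:ℝ) < 1))).and
    (eventually_ge_atTop x)).exists
  have hxy : x ≤ y := hy2
  have hsub : Icc x y ⊆ Ici (0:ℝ) := fun z hz => le_trans (le_trans ha (le_of_lt hx)) hz.1
  obtain ⟨z, hz, hz0⟩ := intermediate_value_Icc hxy (hg.mono hsub) ⟨hle, le_of_lt hy1⟩
  exact hne z (lt_of_lt_of_le hx hz.1) hz0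

set_option maxHeartbeats 2000000 in
/-- Main theorem, part (i): for regular spherically symmetric,
asymptotically flat initial data whose exterior region `[l₀,∞)` is
electrovacuum with total charge `Q ≠ 0` and untrapped, and whose ball
`(0,l₀]` satisfies the dominant energy condition, the areal radius
`𝓡 = r(l₀)` of the ball satisfies the strict inequality `2𝓡 > |Q|`. -/
theorem size_charge_inequality_for_bodies
    (l₀ : ℝ) (hl₀ : 0 < l₀) (Q : ℝ) (hQ : Q ≠ 0)
    (r r' r'' Kr Kr' Kl μ j : ℝ → ℝ)
    (hr0 : r 0 = 0) (hr'0 : r' 0 = 1)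
    (hrpos : ∀ l ∈ Ioi (0 : ℝ), 0 < r l)
    (hr' : ∀ l ∈ Ici (0 : ℝ), HasDerivWithinAt r (r' l) (Ici 0) l)
    (hr'cont : ContinuousOn r' (Ici 0))
    (hr'' : ∀ l ∈ Ioi (0 : ℝ), HasDerivWithinAt r' (r'' l) (Ici 0) l)
    (hKr' : ∀ l ∈ Ioi (0 : ℝ), HasDerivWithinAt Kr (Kr' l) (Ici 0) l)
    (hKrcont0 : ContinuousWithinAt Kr (Ici 0) 0)
    (hham : ∀ l ∈ Ioi (0 : ℝ), Kr l * (Kr l + 2 * Kl l)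
      - ((r' l) ^ 2 + 2 * r l * r'' l - 1) / (r l) ^ 2 = 8 * Real.pi * μ l)
    (hmom : ∀ l ∈ Ioi (0 : ℝ),
      Kr' l + (r' l / r l) * (Kr l - Kl l) = 4 * Real.pi * j l)
    (hDEC : ∀ l ∈ Ioc 0 l₀, |j l| ≤ μ l)
    (hEVμ : ∀ l ∈ Ici l₀, μ l = Q ^ 2 / (8 * Real.pi * (r l) ^ 4))
    (hEVj : ∀ l ∈ Ici l₀, j l = 0)
    (hrlim : Tendsto r atTop atTop)
    (hr'lim : Tendsto r' atTop (𝓝 1))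
    (hrKrlim : Tendsto (fun l => r l * Kr l) atTop (𝓝 0))
    (huntrapped : ∀ l ∈ Ici l₀, 0 < (r' l) ^ 2 - (Kr l * r l) ^ 2) :
    2 * r l₀ > |Q| := by
  -- the (half) Misner–Sharp mass function
  set m : ℝ → ℝ := fun y => r y / 2 * (1 - (r' y) ^ 2 + (Kr y * r y) ^ 2) with hmdef
  have hπ : (0:ℝ) < Real.pi := Real.pi_pos
  -- basic continuity
  have hrc : ContinuousOn r (Ici 0) := fun x hx => (hr' x hx).continuousWithinAt
  have hKc : ContinuousOn Kr (Ici 0) := by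
    intro x hx
    rcases eq_or_lt_of_le (mem_Ici.mp hx) with h | h
    · exact h ▸ hKrcont0
    · exact (hKr' x h).continuousWithinAt
  have hmc : ContinuousOn m (Ici 0) :=
    (hrc.div_const 2).mul (((continuousOn_const).sub (hr'cont.pow 2)).add
      ((hKc.mul hrc).pow 2))
  -- derivative of m on Ioi 0
  have hmderiv : ∀ x ∈ Ioi (0:ℝ), HasDerivAt m
      (4 * Real.pi * (r x) ^ 2 * (μ x * r' x + j x * (Kr x * r x))) x := by
    intro x hx
    have hmem : Ici (0:ℝ) ∈ 𝓝 x := Ici_mem_nhds hx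
    have hRa : HasDerivAt r (r' x) x := (hr' x (mem_Ici.mpr (le_of_lt hx))).hasDerivAt hmem
    have hR'a : HasDerivAt r' (r'' x) x := (hr'' x hx).hasDerivAt hmem
    have hKa : HasDerivAt Kr (Kr' x) x := (hKr' x hx).hasDerivAt hmem
    have hrx : r x ≠ 0 := (hrpos x hx).ne'
    have h := ((hRa.div_const 2).mul
      (((hasDerivAt_const x (1:ℝ)).sub (hR'a.pow 2)).add ((hKa.mul hRa).pow 2)))
    refine h.congr_deriv ?_
    symm
    have e1 := hham x hx
    have e2 := hmom x hx
    field_simp at e1 e2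
    simp only [Pi.mul_apply, Pi.add_apply, Pi.sub_apply, Pi.pow_apply]
    push_cast
    linear_combination (-(r' x) / 2) * e1 + (-(Kr x) * (r x) ^ 2) * e2
  have hm0 : m 0 = 0 := by simp [hmdef, hr0]
  -- if m < 0 then the region is untrapped
  have hf_of_mneg : ∀ x ∈ Ioi (0:ℝ), m x < 0 → 0 < (r' x) ^ 2 - (Kr x * r x) ^ 2 := by
    intro x hx hmx
    have hrx : 0 < r x := hrpos x hx
    have hmx' : r x / 2 * (1 - (r' x) ^ 2 + (Kr x * r x) ^ 2) < 0 := hmx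
    nlinarith
  -- STEP 1 : m l₀ ≥ 0
  have hml₀ : 0 ≤ m l₀ := by
    by_contra hneg
    push_neg at hneg
    set T : Set ℝ := {l : ℝ | l ∈ Icc 0 l₀ ∧ 0 ≤ m l} with hT
    have hTne : T.Nonempty := ⟨0, ⟨le_refl 0, le_of_lt hl₀⟩, le_of_eq hm0.symm⟩
    have hTbdd : BddAbove T := ⟨l₀, fun z hz => hz.1.2⟩
    have hTclosed : IsClosed T := by
      have heq : T = Icc 0 l₀ ∩ m ⁻¹' (Ici 0) := by ext z; simp [hT]
      rw [heq]
      exact ContinuousOn.preimage_isClosed_of_isClosed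
        (hmc.mono Icc_subset_Ici_self) isClosed_Icc isClosed_Ici
    set l₃ := sSup T with hl₃def
    have hl₃T : l₃ ∈ T := hTclosed.csSup_mem hTne hTbdd
    have hl₃0 : 0 ≤ l₃ := hl₃T.1.1
    have hl₃l₀ : l₃ ≤ l₀ := hl₃T.1.2
    have hml₃ : 0 ≤ m l₃ := hl₃T.2
    have hmneg : ∀ l ∈ Ioc l₃ l₀, m l < 0 := by
      intro l hl
      by_contra hge
      push_neg at hge
      have : l ∈ T := ⟨⟨le_trans hl₃0 (le_of_lt hl.1), hl.2⟩, hge⟩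
      exact absurd (le_csSup hTbdd this) (not_le.mpr hl.1)
    -- f > 0 on Ioi l₃
    have hfpos : ∀ l ∈ Ioi l₃, 0 < (r' l) ^ 2 - (Kr l * r l) ^ 2 := by
      intro l hl
      rcases le_or_gt l l₀ with h | h
      · exact hf_of_mneg l (lt_of_le_of_lt hl₃0 hl) (hmneg l ⟨hl, h⟩)
      · exact huntrapped l (mem_Ici.mpr (le_of_lt h))
    -- r' > 0 on Ioi l₃
    have hr'pos : ∀ l ∈ Ioi l₃, 0 < r' l := by
      apply aux_pos_of_ne_zero_tendsto r' l₃ hl₃0 hr'cont _ hr'lim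
      intro x hx hx0
      have := hfpos x hx
      rw [hx0] at this
      nlinarith [sq_nonneg (Kr x * r x)]
    -- m is monotone on [l₃, l₀]
    have hmono : MonotoneOn m (Icc l₃ l₀) := by
      apply monotoneOn_of_deriv_nonneg (convex_Icc l₃ l₀)
        (hmc.mono fun z hz => le_trans hl₃0 hz.1)
      · intro x hx
        rw [interior_Icc] at hx
        exact ((hmderiv x (lt_of_le_of_lt hl₃0 hx.1)).differentiableAt).differentiableWithinAt
      · intro x hx
        rw [interior_Icc] at hx
        have hx0 : (0:ℝ) < x := lt_of_le_of_lt hl₃0 hx.1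
        rw [(hmderiv x hx0).deriv]
        have hdec := hDEC x ⟨hx0, le_of_lt hx.2⟩
        have hr'x : 0 < r' x := hr'pos x hx.1
        have hfx := hfpos x hx.1
        have habs : |Kr x * r x| < r' x := by
          nlinarith [abs_nonneg (Kr x * r x), sq_abs (Kr x * r x)]
        have hjk : -(|j x| * |Kr x * r x|) ≤ j x * (Kr x * r x) := by
          rw [← abs_mul]; exact neg_abs_le _
        have h1 : |j x| * |Kr x * r x| ≤ |j x| * r' x :=
          mul_le_mul_of_nonneg_left (le_of_lt habs) (abs_nonneg _)
        have h2 : |j x| * r' x ≤ μ x * r' x :=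
          mul_le_mul_of_nonneg_right hdec (le_of_lt hr'x)
        have hnn : 0 ≤ μ x * r' x + j x * (Kr x * r x) := by linarith
        positivity
    have hle := hmono ⟨le_refl l₃, hl₃l₀⟩ ⟨hl₃l₀, le_refl l₀⟩ hl₃l₀
    linarith
  -- STEP 2 : exterior analysis
  set F : ℝ → ℝ := fun y => m y + Q ^ 2 / (2 * r y) with hFdef
  have hrpos' : ∀ x ∈ Ici l₀, 0 < r x := fun x hx => hrpos x (lt_of_lt_of_le hl₀ hx)
  have hFderiv : ∀ x ∈ Ioi l₀, HasDerivAt F 0 x := by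
    intro x hx
    have hx0 : (0:ℝ) < x := lt_trans hl₀ hx
    have hxI : x ∈ Ici l₀ := mem_Ici.mpr (le_of_lt hx)
    have hrx : 0 < r x := hrpos x hx0
    have hRa : HasDerivAt r (r' x) x := (hr' x (mem_Ici.mpr (le_of_lt hx0))).hasDerivAt (Ici_mem_nhds hx0)
    have hG : HasDerivAt (fun y => Q ^ 2 / (2 * r y))
        ((0 * (2 * r x) - Q ^ 2 * (0 * r x + 2 * r' x)) / (2 * r x) ^ 2) x :=
      (hasDerivAt_const x (Q ^ 2)).div ((hasDerivAt_const x (2:ℝ)).mul hRa)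
        (by positivity)
    have h := (hmderiv x hx0).add hG
    refine h.congr_deriv ?_
    symm
    rw [hEVμ x hxI, hEVj x hxI]
    field_simp
    ring
  have hFcont : ContinuousOn F (Ici l₀) := by
    apply (hmc.mono (fun z hz => le_trans (le_of_lt hl₀) hz)).add
    exact continuousOn_const.div
      (continuousOn_const.mul (hrc.mono (fun z hz => le_trans (le_of_lt hl₀) hz)))
      (fun x hx => by have := hrpos' x hx; positivity)
  have hFmono : MonotoneOn F (Ici l₀) := by
    apply monotoneOn_of_deriv_nonneg (convex_Ici l₀) hFcont
    · intro x hx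
      rw [interior_Ici] at hx
      exact (hFderiv x hx).differentiableAt.differentiableWithinAt
    · intro x hx
      rw [interior_Ici] at hx
      rw [(hFderiv x hx).deriv]
  have hFanti : AntitoneOn F (Ici l₀) := by
    apply antitoneOn_of_deriv_nonpos (convex_Ici l₀) hFcont
    · intro x hx
      rw [interior_Ici] at hx
      exact (hFderiv x hx).differentiableAt.differentiableWithinAt
    · intro x hx
      rw [interior_Ici] at hx
      rw [(hFderiv x hx).deriv]
  have hFconst : ∀ l ∈ Ici l₀, F l = F l₀ := fun l hl =>
    le_antisymm (hFanti (self_mem_Ici) hl hl) (hFmono (self_mem_Ici) hl hl)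
  -- STEP 3 : conclusion
  by_contra hcon
  push_neg at hcon
  have hR : 0 < r l₀ := hrpos l₀ hl₀
  have hQpos : 0 < |Q| := abs_pos.mpr hQ
  set M : ℝ := m l₀ + Q ^ 2 / (2 * r l₀) with hMdef
  have hMQ : |Q| ≤ M := by
    have h1 : |Q| ≤ Q ^ 2 / (2 * r l₀) := by
      rw [le_div_iff₀ (by positivity)]
      nlinarith [sq_abs Q, abs_nonneg Q]
    rw [hMdef]; linarith
  have hM0 : 0 < M := lt_of_lt_of_le hQpos hMQ
  have hdisc : 0 ≤ M ^ 2 - Q ^ 2 := by nlinarith [sq_abs Q, abs_nonneg Q]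
  set s : ℝ := M + Real.sqrt (M ^ 2 - Q ^ 2) with hsdef
  have hs_root : s ^ 2 - 2 * M * s + Q ^ 2 = 0 := by
    have h := Real.sq_sqrt hdisc
    simp only [hsdef]
    linear_combination h
  have hsM : M ≤ s := le_add_of_nonneg_right (Real.sqrt_nonneg _)
  have hs0 : 0 < s := lt_of_lt_of_le hM0 hsM
  have hRs : r l₀ ≤ s := by linarith
  obtain ⟨X, hX1, hX2⟩ :=
    ((hrlim.eventually_ge_atTop s).and (eventually_ge_atTop l₀)).exists
  obtain ⟨l, hlmem, hrl⟩ := intermediate_value_Icc hX2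
    (hrc.mono (fun z hz => le_trans (le_of_lt hl₀) hz.1)) ⟨hRs, hX1⟩
  have hlI : l ∈ Ici l₀ := hlmem.1
  have e : m l + Q ^ 2 / (2 * s) = M := by
    have h := hFconst l hlI
    simp only [hFdef, hrl] at h
    exact h
  have e' : 2 * s * m l + Q ^ 2 = 2 * M * s := by
    field_simp at e
    linarith
  have hmls : m l = s / 2 * (1 - (r' l) ^ 2 + (Kr l * r l) ^ 2) := by
    simp only [hmdef]
    rw [hrl]
  have hf := huntrapped l hlI
  have hcontr : s ^ 2 * ((r' l) ^ 2 - (Kr l * r l) ^ 2) = 0 := by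
    linear_combination (-1 : ℝ) * e' + (2 * s) * hmls + hs_root
  nlinarith [mul_pos (pow_pos hs0 2) hf]
end

section
/- (Main theorem, part (ii): size–charge inequality for the horizon.) Let l₀ > 0 and Q ≠ 0 a real constant. Let r : [l₀,∞) → ℝ be twice differentiable and positive, K_r : [l₀,∞) → ℝ differentiable, K_l : [l₀,∞) → ℝ, satisfying the electrovacuum constraints K_r(K_r + 2K_l) − (r'² + 2 r r'' − 1)/r² = Q²/r⁴ and K_r' + (r'/r)(K_r − K_l) = 0 on [l₀,∞), with asymptotic flatness lim_{l→∞} r(l) = ∞, lim_{l→∞} r'(l) = 1, lim_{l→∞} r(l)K_r(l) = 0, and assume f and r' are continuous. Let M = lim_{l→∞} 𝓔(l) be the ADM mass. If the set H = { l ≥ l₀ : f(l) = 0 } is nonempty, then M ≥ |Q|, H has a greatest element l₁ (the horizon), the horizon radius satisfies 𝓡₀ = r(l₁) = M + √(M² − Q²), f(l) > 0 for all l > l₁, and 𝓡₀ ≥ |Q|, with equality if and only if M = |Q| (the extreme Reissner–Nordström case). -/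
open Set Filter Topology

/-- Main theorem, part (ii): for an asymptotically flat
electrovacuum exterior region `[l₀,∞)` with charge `Q ≠ 0` and ADM mass `M`
(the limit at infinity of the Misner–Sharp energy), if the set
`H = {l ≥ l₀ : f(l) = 0}` is nonempty then `M ≥ |Q|`, `H` has a greatest
element `l₁` (the horizon), the horizon radius is
`𝓡₀ = r(l₁) = M + √(M² − Q²)`, `f > 0` beyond the horizon, and
`𝓡₀ ≥ |Q|` with equality iff `M = |Q|`. -/
theorem size_charge_inequality_for_horizons
    (l₀ : ℝ) (hl₀ : 0 < l₀) (Q : ℝ) (hQ : Q ≠ 0)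
    (r r' r'' Kr Kr' Kl : ℝ → ℝ) (M : ℝ)
    (hrpos : ∀ l ∈ Ici l₀, 0 < r l)
    (hr' : ∀ l ∈ Ici l₀, HasDerivWithinAt r (r' l) (Ici l₀) l)
    (hr'' : ∀ l ∈ Ici l₀, HasDerivWithinAt r' (r'' l) (Ici l₀) l)
    (hKr' : ∀ l ∈ Ici l₀, HasDerivWithinAt Kr (Kr' l) (Ici l₀) l)
    (hham : ∀ l ∈ Ici l₀, Kr l * (Kr l + 2 * Kl l)
      - ((r' l) ^ 2 + 2 * r l * r'' l - 1) / (r l) ^ 2 = Q ^ 2 / (r l) ^ 4)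
    (hmom : ∀ l ∈ Ici l₀, Kr' l + (r' l / r l) * (Kr l - Kl l) = 0)
    (hrlim : Tendsto r atTop atTop)
    (hr'lim : Tendsto r' atTop (𝓝 1))
    (hrKrlim : Tendsto (fun l => r l * Kr l) atTop (𝓝 0))
    (hfcont : ContinuousOn (fun l => (r' l) ^ 2 - (Kr l * r l) ^ 2) (Ici l₀))
    (hr'cont : ContinuousOn r' (Ici l₀))
    (hM : Tendsto (fun l => r l / 2 * (1 - ((r' l) ^ 2 - (Kr l * r l) ^ 2)))
      atTop (𝓝 M))
    (hH : {l : ℝ | l₀ ≤ l ∧ (r' l) ^ 2 - (Kr l * r l) ^ 2 = 0}.Nonempty) :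
    M ≥ |Q| ∧
    ∃ l₁ : ℝ, IsGreatest {l : ℝ | l₀ ≤ l ∧ (r' l) ^ 2 - (Kr l * r l) ^ 2 = 0} l₁ ∧
      r l₁ = M + Real.sqrt (M ^ 2 - Q ^ 2) ∧
      (∀ l, l₁ < l → 0 < (r' l) ^ 2 - (Kr l * r l) ^ 2) ∧
      |Q| ≤ r l₁ ∧ (r l₁ = |Q| ↔ M = |Q|) := by
  set H : Set ℝ := {l : ℝ | l₀ ≤ l ∧ (r' l) ^ 2 - (Kr l * r l) ^ 2 = 0} with hHdef
  set G : ℝ → ℝ := fun l =>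
    r l / 2 * (1 - ((r' l) ^ 2 - (Kr l * r l) ^ 2)) + Q ^ 2 / (2 * r l) with hGdef
  -- G has derivative zero on [l₀, ∞)
  have hGderiv : ∀ l ∈ Ici l₀, HasDerivWithinAt G 0 (Ici l₀) l := by
    intro l hl
    have ha : r l ≠ 0 := (hrpos l hl).ne'
    have h1 := hr' l hl
    have h2 := hr'' l hl
    have h3 := hKr' l hl
    have hC : HasDerivWithinAt (fun x => Kr x * r x)
        (Kr' l * r l + Kr l * r' l) (Ici l₀) l := h3.mul h1
    have hf : HasDerivWithinAt (fun x => (r' x) ^ 2 - (Kr x * r x) ^ 2)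
        ((2 : ℕ) * (r' l) ^ 1 * r'' l
          - (2 : ℕ) * (Kr l * r l) ^ 1 * (Kr' l * r l + Kr l * r' l)) (Ici l₀) l :=
      (h2.pow 2).sub (hC.pow 2)
    have hmain : HasDerivWithinAt
        (fun x => r x / 2 * (1 - ((r' x) ^ 2 - (Kr x * r x) ^ 2)))
        (r' l / 2 * (1 - ((r' l) ^ 2 - (Kr l * r l) ^ 2))
          + r l / 2 * (0 - ((2 : ℕ) * (r' l) ^ 1 * r'' l
            - (2 : ℕ) * (Kr l * r l) ^ 1 * (Kr' l * r l + Kr l * r' l)))) (Ici l₀) l :=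
      (h1.div_const 2).mul ((hasDerivWithinAt_const l (Ici l₀) (1:ℝ)).sub hf)
    have h2r : HasDerivWithinAt (fun x => 2 * r x) (2 * r' l) (Ici l₀) l := h1.const_mul 2
    have hQd : HasDerivWithinAt (fun x => Q ^ 2 / (2 * r x))
        ((0 * (2 * r l) - Q ^ 2 * (2 * r' l)) / (2 * r l) ^ 2) (Ici l₀) l :=
      (hasDerivWithinAt_const l (Ici l₀) (Q ^ 2)).div h2r (by
        simp only [ne_eq, mul_eq_zero]; push_neg; exact ⟨two_ne_zero, ha⟩)
    have htot := hmain.add hQd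
    refine htot.congr_deriv ?_
    -- algebraic identity from the constraints
    have hham' := hham l hl
    have hmom' := hmom l hl
    have hham2 : Kr l * (Kr l + 2 * Kl l) * (r l) ^ 4
        - ((r' l) ^ 2 + 2 * r l * r'' l - 1) * (r l) ^ 2 = Q ^ 2 := by
      field_simp at hham'
      apply mul_right_cancel₀ (pow_ne_zero 2 ha)
      linear_combination (r l) ^ 2 * hham'
    have hmom2 : Kr' l * r l = r' l * (Kl l - Kr l) := by
      field_simp at hmom'; linarith
    symm
    field_simp
    linear_combination (-(r' l)) * hham2 + (-(2 * Kr l * (r l) ^ 4)) * hmom2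
  -- G is continuous on [l₀, ∞)
  have hGcont : ContinuousOn G (Ici l₀) := fun l hl => (hGderiv l hl).continuousWithinAt
  -- G is constant on [l₀, ∞)
  have hGconst : ∀ l ∈ Ici l₀, G l = G l₀ := by
    intro l hl
    exact constant_of_has_deriv_right_zero (hGcont.mono (Icc_subset_Ici_self))
      (fun x hx => (hGderiv x hx.1).mono (Ici_subset_Ici.2 hx.1))
      l ⟨hl, le_refl l⟩
  -- G tends to M at infinity, hence G ≡ M
  have hQlim : Tendsto (fun l => Q ^ 2 / (2 * r l)) atTop (𝓝 0) := by
    have h2r : Tendsto (fun l => 2 * r l) atTop atTop :=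
      hrlim.const_mul_atTop two_pos
    have := h2r.inv_tendsto_atTop
    have := this.const_mul (Q ^ 2)
    simpa [div_eq_mul_inv] using this
  have hGlim : Tendsto G atTop (𝓝 (M + 0)) := hM.add hQlim
  have hGM : ∀ l ∈ Ici l₀, G l = M := by
    have hconst : Tendsto G atTop (𝓝 (G l₀)) := by
      apply Tendsto.congr' _ tendsto_const_nhds
      filter_upwards [eventually_ge_atTop l₀] with x hx
      exact (hGconst x hx).symm
    have : G l₀ = M + 0 := tendsto_nhds_unique hconst hGlim
    intro l hl
    rw [hGconst l hl, this, add_zero]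
  -- key algebraic identity: f l * r l ^ 2 = r² - 2 M r + Q²
  have key : ∀ l ∈ Ici l₀,
      ((r' l) ^ 2 - (Kr l * r l) ^ 2) * (r l) ^ 2 = (r l) ^ 2 - 2 * M * r l + Q ^ 2 := by
    intro l hl
    have h := hGM l hl
    have ha : r l ≠ 0 := (hrpos l hl).ne'
    simp only [hGdef] at h
    field_simp at h
    linear_combination -h
  -- M ≥ |Q|
  obtain ⟨h₀, hh₀⟩ := hH
  have hMQ : M ≥ |Q| := by
    have hk := key h₀ hh₀.1
    rw [hh₀.2, zero_mul] at hk
    have hr₀ : 0 < r h₀ := hrpos h₀ hh₀.1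
    have hQ2 : Q ^ 2 = |Q| ^ 2 := (sq_abs Q).symm
    nlinarith [sq_nonneg (r h₀ - |Q|), abs_pos.2 hQ]
  have hQpos : 0 < |Q| := abs_pos.2 hQ
  set D : ℝ := Real.sqrt (M ^ 2 - Q ^ 2) with hDdef
  have hMQsq : 0 ≤ M ^ 2 - Q ^ 2 := by nlinarith [sq_abs Q]
  have hD2 : D ^ 2 = M ^ 2 - Q ^ 2 := Real.sq_sqrt hMQsq
  have hD0 : 0 ≤ D := Real.sqrt_nonneg _
  -- factorisation
  have factor : ∀ l ∈ Ici l₀,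
      ((r' l) ^ 2 - (Kr l * r l) ^ 2) * (r l) ^ 2
        = (r l - (M + D)) * (r l - (M - D)) := by
    intro l hl
    rw [key l hl]
    have hQ2 : Q ^ 2 = (M + D) * (M - D) := by linear_combination hD2
    linear_combination hQ2
  -- beyond radius M + D, f is positive
  have hbigpos : ∀ l ∈ Ici l₀, M + D < r l → 0 < (r' l) ^ 2 - (Kr l * r l) ^ 2 := by
    intro l hl hbig
    have hfac := factor l hl
    have hprod : 0 < (r l - (M + D)) * (r l - (M - D)) := by nlinarith
    have hr2 : 0 < (r l) ^ 2 := pow_pos (hrpos l hl) 2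
    nlinarith [hfac]
  -- choose L beyond which r > M + D
  obtain ⟨L, hL⟩ := (hrlim.eventually_gt_atTop (M + D)).and (eventually_ge_atTop l₀)
      |>.exists_forall_of_atTop
  have hLl₀ : l₀ ≤ L := (hL L le_rfl).2
  -- H ⊆ Icc l₀ L
  have hHsub : H ⊆ Icc l₀ L := by
    intro l hlH
    refine ⟨hlH.1, ?_⟩
    by_contra hlL
    push_neg at hlL
    have := hbigpos l hlH.1 (hL l hlL.le).1
    rw [hlH.2] at this
    exact lt_irrefl 0 this
  -- H is closed
  have hHclosed : IsClosed H := by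
    have : H = Ici l₀ ∩ (fun l => (r' l) ^ 2 - (Kr l * r l) ^ 2) ⁻¹' {0} := by
      ext x; simp [hHdef, mem_setOf_eq]
    rw [this]
    exact hfcont.preimage_isClosed_of_isClosed isClosed_Ici isClosed_singleton
  -- greatest element
  have hHcpt : IsCompact H := isCompact_Icc.of_isClosed_subset hHclosed hHsub
  obtain ⟨l₁, hl₁⟩ := hHcpt.exists_isGreatest ⟨h₀, hh₀⟩
  have hl₁Ici : l₁ ∈ Ici l₀ := hl₁.1.1
  have hrcont : ContinuousOn r (Ici l₀) := fun l hl => (hr' l hl).continuousWithinAt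
  -- r l₁ = M + D
  have hrl₁ : r l₁ = M + D := by
    have hf₁ : (r' l₁) ^ 2 - (Kr l₁ * r l₁) ^ 2 = 0 := hl₁.1.2
    have hfac := factor l₁ hl₁Ici
    rw [hf₁, zero_mul] at hfac
    rcases mul_eq_zero.1 hfac.symm with h | h
    · linarith [sub_eq_zero.1 h]
    · have hr₁ : r l₁ = M - D := by linarith [sub_eq_zero.1 h]
      rcases eq_or_lt_of_le hD0 with hD | hD
      · rw [hr₁, ← hD]; ring
      · exfalso
        set L' : ℝ := max L l₁ with hL'def
        have hl₁L' : l₁ ≤ L' := le_max_right _ _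
        have hL'big : M + D < r L' := (hL L' (le_max_left _ _)).1
        have hsub : Icc l₁ L' ⊆ Ici l₀ := fun x hx => le_trans hl₁Ici hx.1
        have hivt := intermediate_value_Icc hl₁L' (hrcont.mono hsub)
        have hmem : M + D ∈ Icc (r l₁) (r L') := by
          constructor
          · rw [hr₁]; linarith
          · linarith
        obtain ⟨c, hc, hrc⟩ := hivt hmem
        have hcIci : c ∈ Ici l₀ := hsub hc
        have hfc : (r' c) ^ 2 - (Kr c * r c) ^ 2 = 0 := by
          have : ((r' c) ^ 2 - (Kr c * r c) ^ 2) * (r c) ^ 2 = 0 := by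
            rw [factor c hcIci, hrc]; ring
          have hrc2 : (r c) ^ 2 ≠ 0 := pow_ne_zero 2 (hrpos c hcIci).ne'
          exact (mul_eq_zero.1 this).resolve_right hrc2
        have hcH : c ∈ H := ⟨hcIci, hfc⟩
        have hcle : c ≤ l₁ := hl₁.2 hcH
        have hceq : c = l₁ := le_antisymm hcle hc.1
        rw [hceq, hr₁] at hrc
        linarith
  -- f > 0 beyond l₁
  have hbeyond : ∀ l, l₁ < l → 0 < (r' l) ^ 2 - (Kr l * r l) ^ 2 := by
    intro l hll₁
    have hlIci : l ∈ Ici l₀ := le_trans hl₁Ici hll₁.le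
    rcases lt_trichotomy ((r' l) ^ 2 - (Kr l * r l) ^ 2) 0 with hneg | hzero | hpos
    · exfalso
      set L' : ℝ := max L l with hL'def
      have hlL' : l ≤ L' := le_max_right _ _
      have hL'pos : 0 < (r' L') ^ 2 - (Kr L' * r L') ^ 2 :=
        hbigpos L' (le_trans hlIci hlL') (hL L' (le_max_left _ _)).1
      have hsub : Icc l L' ⊆ Ici l₀ := fun x hx => le_trans hlIci hx.1
      have hivt := intermediate_value_Icc hlL' (hfcont.mono hsub)
      obtain ⟨c, hc, hfc⟩ := hivt ⟨hneg.le, hL'pos.le⟩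
      have hcH : c ∈ H := ⟨hsub hc, hfc⟩
      have : c ≤ l₁ := hl₁.2 hcH
      linarith [hc.1]
    · exfalso
      have hcH : l ∈ H := ⟨hlIci, hzero⟩
      have : l ≤ l₁ := hl₁.2 hcH
      linarith
    · exact hpos
  refine ⟨hMQ, l₁, hl₁, hrl₁, hbeyond, ?_, ?_⟩
  · rw [hrl₁]; linarith
  · constructor
    · intro h
      rw [hrl₁] at h
      have hDle : D ≤ 0 := by linarith
      have hDeq : D = 0 := le_antisymm hDle hD0
      rw [hDeq] at h; linarith
    · intro h
      have : M ^ 2 - Q ^ 2 = 0 := by rw [h, sq_abs]; ring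
      rw [hrl₁, hDdef, this, Real.sqrt_zero, add_zero, h]
end

section
/- (Corollary: trapped surfaces from concentration of charge.) Let l₀ > 0 and Q ≠ 0 a real constant. Let r : [0,∞) → ℝ be twice differentiable with r(0) = 0, continuous first derivative, r'(0) = 1 and r(l) > 0 for all l > 0; let K_r : [0,∞) → ℝ be differentiable and continuous at 0, and K_l, μ, j : (0,∞) → ℝ, such that the Hamiltonian constraint K_r(K_r + 2K_l) − (r'² + 2 r r'' − 1)/r² = 8π μ and the momentum constraint K_r' + (r'/r)(K_r − K_l) = 4π j hold on (0,∞). Assume the dominant energy condition μ ≥ |j| on (0,l₀], electrovacuum exterior μ = Q²/(8π r⁴) and j = 0 on [l₀,∞), and asymptotic flatness lim_{l→∞} r(l) = ∞, lim_{l→∞} r'(l) = 1, lim_{l→∞} r(l)K_r(l) = 0. If 2 r(l₀) ≤ |Q|, then there exists l ≥ l₀ with f(l) = r'(l)² − (K_r(l) r(l))² ≤ 0; that is, there is a (marginally) trapped surface enclosing the ball 𝓑. -/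
open Set Filter Topology

set_option maxHeartbeats 1000000 in
/-- Corollary: trapped surfaces from concentration of charge:
for regular spherically symmetric, asymptotically flat initial data whose
exterior region `[l₀,∞)` is electrovacuum with total charge `Q ≠ 0` and whose
ball `(0,l₀]` satisfies the dominant energy condition, if `2 r(l₀) ≤ |Q|`
then there is a (marginally) trapped surface enclosing the ball: some
`l ≥ l₀` with `f(l) = r'² − (K_r r)² ≤ 0`. -/
theorem trapped_surfaces_from_charge_concentration
    (l₀ : ℝ) (hl₀ : 0 < l₀) (Q : ℝ) (hQ : Q ≠ 0)
    (r r' r'' Kr Kr' Kl μ j : ℝ → ℝ)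
    (hr0 : r 0 = 0) (hr'0 : r' 0 = 1)
    (hrpos : ∀ l ∈ Ioi (0 : ℝ), 0 < r l)
    (hr' : ∀ l ∈ Ici (0 : ℝ), HasDerivWithinAt r (r' l) (Ici 0) l)
    (hr'cont : ContinuousOn r' (Ici 0))
    (hr'' : ∀ l ∈ Ioi (0 : ℝ), HasDerivWithinAt r' (r'' l) (Ici 0) l)
    (hKr' : ∀ l ∈ Ioi (0 : ℝ), HasDerivWithinAt Kr (Kr' l) (Ici 0) l)
    (hKrcont0 : ContinuousWithinAt Kr (Ici 0) 0)
    (hham : ∀ l ∈ Ioi (0 : ℝ), Kr l * (Kr l + 2 * Kl l)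
      - ((r' l) ^ 2 + 2 * r l * r'' l - 1) / (r l) ^ 2 = 8 * Real.pi * μ l)
    (hmom : ∀ l ∈ Ioi (0 : ℝ),
      Kr' l + (r' l / r l) * (Kr l - Kl l) = 4 * Real.pi * j l)
    (hDEC : ∀ l ∈ Ioc 0 l₀, |j l| ≤ μ l)
    (hEVμ : ∀ l ∈ Ici l₀, μ l = Q ^ 2 / (8 * Real.pi * (r l) ^ 4))
    (hEVj : ∀ l ∈ Ici l₀, j l = 0)
    (hrlim : Tendsto r atTop atTop)
    (hr'lim : Tendsto r' atTop (𝓝 1))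
    (hrKrlim : Tendsto (fun l => r l * Kr l) atTop (𝓝 0))
    (hsize : 2 * r l₀ ≤ |Q|) :
    ∃ l, l₀ ≤ l ∧ (r' l) ^ 2 - (Kr l * r l) ^ 2 ≤ 0 := by
  by_contra hcon
  push_neg at hcon
  have hπ : (0:ℝ) < Real.pi := Real.pi_pos
  obtain ⟨w, hw_def⟩ : ∃ w : ℝ → ℝ, w = fun l => (r' l) ^ 2 - (r l * Kr l) ^ 2 := ⟨_, rfl⟩
  obtain ⟨W, hW_def⟩ : ∃ W : ℝ → ℝ, W = fun l =>
      2 * r' l * r'' l - 2 * (r l * Kr l) * (r' l * Kr l + r l * Kr' l) := ⟨_, rfl⟩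
  obtain ⟨u, hu_def⟩ : ∃ u : ℝ → ℝ, u = fun l => r' l + r l * Kr l := ⟨_, rfl⟩
  obtain ⟨v, hv_def⟩ : ∃ v : ℝ → ℝ, v = fun l => r' l - r l * Kr l := ⟨_, rfl⟩
  -- continuity facts
  have hrc : ContinuousOn r (Ici 0) := fun l hl => (hr' l hl).continuousWithinAt
  have hKrc : ContinuousOn Kr (Ici 0) := by
    intro l hl
    rcases eq_or_lt_of_le (mem_Ici.mp hl) with h | h
    · exact h ▸ hKrcont0
    · exact (hKr' l h).continuousWithinAt
  have hwc : ContinuousOn w (Ici 0) := by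
    rw [hw_def]; exact (hr'cont.pow 2).sub ((hrc.mul hKrc).pow 2)
  have huc : ContinuousOn u (Ici 0) := by
    rw [hu_def]; exact hr'cont.add (hrc.mul hKrc)
  have hvc : ContinuousOn v (Ici 0) := by
    rw [hv_def]; exact hr'cont.sub (hrc.mul hKrc)
  -- derivative of w
  have hwd : ∀ l ∈ Ioi (0:ℝ), HasDerivWithinAt w (W l) (Ici 0) l := by
    intro l hl
    have h1 := (hr'' l hl).pow 2
    have h2 := ((hr' l (mem_Ici.mpr (le_of_lt (mem_Ioi.mp hl)))).mul (hKr' l hl)).pow 2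
    have h3 := h1.sub h2
    have heq : W l = (↑(2:ℕ) * r' l ^ (2-1) * r'' l)
        - (↑(2:ℕ) * (r l * Kr l) ^ (2-1) * (r' l * Kr l + r l * Kr' l)) := by
      simp only [hW_def]; push_cast; ring
    rw [hw_def, heq]
    exact h3
  -- the key identity from the constraints
  have hkey : ∀ l ∈ Ioi (0:ℝ), r l * W l
      = r' l * (1 - w l) - 8 * Real.pi * (r l)^2 * (μ l * r' l + j l * (r l * Kr l)) := by
    intro l hl
    have hrne : r l ≠ 0 := (hrpos l hl).ne'
    have H1 : (r l)^2*(Kr l*(Kr l+2*Kl l)) - ((r' l)^2 + 2*r l*r'' l - 1)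
        = 8*Real.pi*μ l*(r l)^2 := by
      have h := hham l hl; field_simp at h; linear_combination h
    have H2 : r l*Kr' l + r' l*(Kr l - Kl l) = 4*Real.pi*j l*r l := by
      have h := hmom l hl; field_simp at h; linear_combination h
    simp only [hw_def, hW_def]
    linear_combination (-(r' l)) * H1 + (-(2*(r l)^2*(Kr l))) * H2
  -- positivity of w on the exterior (from the contradiction hypothesis)
  have hw0 : ∀ l, l₀ ≤ l → 0 < w l := by
    intro l hl
    have h := hcon l hl
    have he : (Kr l * r l)^2 = (r l * Kr l)^2 := by ring
    simp only [hw_def]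
    linarith
  -- r' is positive on the exterior
  have hr'pos : ∀ l, l₀ ≤ l → 0 < r' l := by
    intro l hl
    rcases lt_trichotomy (r' l) 0 with hneg | h0 | hpos
    · exfalso
      obtain ⟨b, hb1, hb2⟩ :=
        ((hr'lim.eventually (eventually_gt_nhds (by norm_num : (1:ℝ)/2 < 1))).and
          (eventually_ge_atTop l)).exists
      have hsub : Icc l b ⊆ Ici (0:ℝ) := fun x hx => le_trans (le_trans hl₀.le hl) hx.1
      have h0m : (0:ℝ) ∈ Icc (r' l) (r' b) := ⟨hneg.le, by linarith⟩
      obtain ⟨c, hc, hc0⟩ := intermediate_value_Icc hb2 (hr'cont.mono hsub) h0m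
      have hwc' := hw0 c (le_trans hl hc.1)
      simp only [hw_def] at hwc'
      rw [hc0] at hwc'
      nlinarith [sq_nonneg (r c * Kr c)]
    · exfalso
      have hwc' := hw0 l hl
      simp only [hw_def] at hwc'
      rw [h0] at hwc'
      nlinarith [sq_nonneg (r l * Kr l)]
    · exact hpos
  -- u, v positive at l₀
  have hu₀ : 0 < u l₀ := by
    have h1 := hw0 l₀ le_rfl
    have h2 := hr'pos l₀ le_rfl
    simp only [hw_def] at h1
    simp only [hu_def]
    nlinarith [sq_nonneg (r' l₀ + r l₀ * Kr l₀)]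
  have hv₀ : 0 < v l₀ := by
    have h1 := hw0 l₀ le_rfl
    have h2 := hr'pos l₀ le_rfl
    simp only [hw_def] at h1
    simp only [hv_def]
    nlinarith [sq_nonneg (r' l₀ - r l₀ * Kr l₀)]
  -- THE BARRIER ARGUMENT : w l₀ ≤ 1
  have hwl₀le : w l₀ ≤ 1 := by
    by_contra hgt
    push_neg at hgt
    obtain ⟨c, hc_def⟩ : ∃ c : ℝ, c = (1 + w l₀)/2 := ⟨_, rfl⟩
    have hc1 : 1 < c := by rw [hc_def]; linarith
    have hc2 : c < w l₀ := by rw [hc_def]; linarith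
    obtain ⟨A, hA_def⟩ : ∃ A : Set ℝ, A = (Icc 0 l₀ ∩ w ⁻¹' Iic c ∪
        (Icc 0 l₀ ∩ u ⁻¹' Iic 0 ∪ Icc 0 l₀ ∩ v ⁻¹' Iic 0)) := ⟨_, rfl⟩
    have hw00 : w 0 = 1 := by simp [hw_def, hr0, hr'0]
    have h0A : (0:ℝ) ∈ A := by
      rw [hA_def]
      refine Or.inl ⟨⟨le_rfl, hl₀.le⟩, ?_⟩
      show w 0 ≤ c
      rw [hw00]; linarith
    have hAsub : A ⊆ Icc 0 l₀ := by
      rw [hA_def]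
      rintro x (⟨h, _⟩ | ⟨h, _⟩ | ⟨h, _⟩) <;> exact h
    have hAbdd : BddAbove A := ⟨l₀, fun x hx => (hAsub hx).2⟩
    have hIccsub : Icc (0:ℝ) l₀ ⊆ Ici 0 := fun x hx => hx.1
    have hAclosed : IsClosed A := by
      rw [hA_def]
      exact (((hwc.mono hIccsub).preimage_isClosed_of_isClosed isClosed_Icc isClosed_Iic).union
        (((huc.mono hIccsub).preimage_isClosed_of_isClosed isClosed_Icc isClosed_Iic).union
         ((hvc.mono hIccsub).preimage_isClosed_of_isClosed isClosed_Icc isClosed_Iic)))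
    obtain ⟨a, ha_def⟩ : ∃ a : ℝ, a = sSup A := ⟨_, rfl⟩
    have haA : a ∈ A := by
      rw [ha_def]; exact hAclosed.csSup_mem ⟨0, h0A⟩ hAbdd
    have haIcc : a ∈ Icc 0 l₀ := hAsub haA
    have hl₀A : l₀ ∉ A := by
      rw [hA_def]
      rintro (⟨_, h⟩ | ⟨_, h⟩ | ⟨_, h⟩)
      · exact absurd (h : w l₀ ≤ c) (not_le.mpr hc2)
      · exact absurd (h : u l₀ ≤ 0) (not_le.mpr hu₀)
      · exact absurd (h : v l₀ ≤ 0) (not_le.mpr hv₀)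
    have hal₀ : a < l₀ := lt_of_le_of_ne haIcc.2 (fun h => hl₀A (h ▸ haA))
    have ha0 : (0:ℝ) ≤ a := haIcc.1
    have hout : ∀ x, a < x → x ≤ l₀ → c < w x ∧ 0 < u x ∧ 0 < v x := by
      intro x hx1 hx2
      have hxA : x ∉ A := by
        intro h
        have := le_csSup hAbdd h
        rw [← ha_def] at this
        exact absurd this (not_le.mpr hx1)
      have hxIcc : x ∈ Icc (0:ℝ) l₀ := ⟨le_trans ha0 (le_of_lt hx1), hx2⟩
      refine ⟨?_, ?_, ?_⟩
      · by_contra h; push_neg at h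
        exact hxA (by rw [hA_def]; exact Or.inl ⟨hxIcc, h⟩)
      · by_contra h; push_neg at h
        exact hxA (by rw [hA_def]; exact Or.inr (Or.inl ⟨hxIcc, h⟩))
      · by_contra h; push_neg at h
        exact hxA (by rw [hA_def]; exact Or.inr (Or.inr ⟨hxIcc, h⟩))
    -- one-sided limits at a
    have hlim : ∀ g : ℝ → ℝ, ContinuousOn g (Ici 0) →
        (∀ x, a < x → x ≤ l₀ → 0 < g x) → 0 ≤ g a := by
      intro g hg hpos
      have h2 : Tendsto g (𝓝[>] a) (𝓝 (g a)) :=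
        (hg a ha0).tendsto.mono_left
          (nhdsWithin_mono a (fun x hx => le_trans ha0 (le_of_lt hx)))
      have h3 : ∀ᶠ x in 𝓝[>] a, 0 ≤ g x := by
        filter_upwards [Ioc_mem_nhdsGT hal₀] with x hx
        exact (hpos x hx.1 hx.2).le
      exact ge_of_tendsto h2 h3
    have hwa : w a ≤ c := by
      have hweq : w a = u a * v a := by
        simp only [hw_def, hu_def, hv_def]; ring
      rw [hA_def] at haA
      rcases haA with ⟨_, h⟩ | ⟨_, h⟩ | ⟨_, h⟩
      · exact h
      · have h0 : u a = 0 :=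
          le_antisymm h (hlim u huc (fun x h1 h2 => (hout x h1 h2).2.1))
        rw [hweq, h0, zero_mul]; linarith
      · have h0 : v a = 0 :=
          le_antisymm h (hlim v hvc (fun x h1 h2 => (hout x h1 h2).2.2))
        rw [hweq, h0, mul_zero]; linarith
    -- w is antitone on [a, l₀]
    have hanti : AntitoneOn w (Icc a l₀) := by
      apply antitoneOn_of_deriv_nonpos (convex_Icc a l₀)
        (hwc.mono (fun x hx => le_trans ha0 hx.1))
      · intro x hx
        rw [interior_Icc] at hx
        have hx0 : (0:ℝ) < x := lt_of_le_of_lt ha0 hx.1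
        exact ((hwd x hx0).hasDerivAt (Ici_mem_nhds hx0)).differentiableAt.differentiableWithinAt
      · intro x hx
        rw [interior_Icc] at hx
        have hx0 : (0:ℝ) < x := lt_of_le_of_lt ha0 hx.1
        have hda : HasDerivAt w (W x) x := (hwd x hx0).hasDerivAt (Ici_mem_nhds hx0)
        rw [hda.deriv]
        obtain ⟨hcw, hux, hvx⟩ := hout x hx.1 hx.2.le
        have hDx := abs_le.mp (hDEC x ⟨hx0, hx.2.le⟩)
        have hj1 : 0 ≤ μ x + j x := by linarith [hDx.1]
        have hj2 : 0 ≤ μ x - j x := by linarith [hDx.2]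
        have hid := hkey x hx0
        have hrx : 0 < r x := hrpos x hx0
        have hr'x : 0 < r' x := by
          have huv : u x + v x = 2 * r' x := by simp only [hu_def, hv_def]; ring
          linarith
        have hsum : μ x * r' x + j x * (r x * Kr x)
            = ((μ x + j x) * u x + (μ x - j x) * v x)/2 := by
          simp only [hu_def, hv_def]; ring
        have hrW : r x * W x ≤ 0 := by
          rw [hid, hsum]
          have e1 : 0 ≤ (μ x + j x) * u x := mul_nonneg hj1 hux.le
          have e2 : 0 ≤ (μ x - j x) * v x := mul_nonneg hj2 hvx.le
          have e3 : r' x * (1 - w x) ≤ 0 :=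
            mul_nonpos_of_nonneg_of_nonpos hr'x.le (by linarith)
          have e4 : 0 ≤ 8*Real.pi*(r x)^2*(((μ x + j x)*u x + (μ x - j x)*v x)/2) :=
            mul_nonneg (by positivity) (by linarith)
          linarith
        by_contra hWpos
        push_neg at hWpos
        nlinarith [mul_pos hrx hWpos]
    have hfin := hanti ⟨le_rfl, hal₀.le⟩ ⟨hal₀.le, le_rfl⟩ hal₀.le
    linarith
  -- the mass function and its exterior first integral
  obtain ⟨m, hm_def⟩ : ∃ m : ℝ → ℝ, m = fun l => r l/2 * (1 - w l) := ⟨_, rfl⟩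
  have hrl₀ : 0 < r l₀ := hrpos l₀ hl₀
  have hm0 : 0 ≤ m l₀ := by
    simp only [hm_def]
    exact mul_nonneg (by linarith) (by linarith)
  obtain ⟨F, hF_def⟩ : ∃ F : ℝ → ℝ, F = fun l => m l + Q^2/(2*r l) := ⟨_, rfl⟩
  have hQpos : 0 < |Q| := abs_pos.mpr hQ
  have hFd : ∀ l, l₀ ≤ l → HasDerivWithinAt F 0 (Ici 0) l := by
    intro l hl
    have hl0 : (0:ℝ) < l := lt_of_lt_of_le hl₀ hl
    have hrl : 0 < r l := hrpos l hl0
    have hrne : r l ≠ 0 := hrl.ne'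
    have hmd : HasDerivWithinAt m (r' l/2*(1 - w l) + r l/2*(0 - W l)) (Ici 0) l := by
      rw [hm_def]
      exact ((hr' l hl0.le).div_const 2).mul ((hasDerivWithinAt_const l _ 1).sub (hwd l hl0))
    have h2r : HasDerivWithinAt (fun x => 2 * r x) (2 * r' l) (Ici 0) l :=
      (hr' l hl0.le).const_mul 2
    have hqd : HasDerivWithinAt (fun x => Q^2/(2*r x))
        ((0*(2*r l) - Q^2*(2*r' l))/(2*r l)^2) (Ici 0) l :=
      (hasDerivWithinAt_const l _ (Q^2)).div h2r (by positivity)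
    have hid2 : r l * W l = r' l * (1 - w l) - Q^2 * r' l/(r l)^2 := by
      rw [hkey l hl0, hEVμ l hl, hEVj l hl]
      field_simp
      ring
    have heq : r' l/2*(1 - w l) + r l/2*(0 - W l)
        + (0*(2*r l) - Q^2*(2*r' l))/(2*r l)^2 = 0 := by
      field_simp at hid2 ⊢
      linear_combination (-(1:ℝ)) * hid2
    have h := hmd.add hqd
    rw [hF_def]
    rw [heq] at h
    exact h
  -- the conserved quantity E := F l₀ and its lower bound
  have hE : |Q| ≤ F l₀ := by
    have h1 : |Q| ≤ Q^2/(2*r l₀) := by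
      rw [le_div_iff₀ (by positivity)]
      calc |Q| * (2*r l₀) ≤ |Q| * |Q| := mul_le_mul_of_nonneg_left hsize hQpos.le
        _ = Q^2 := by rw [← abs_mul, abs_mul_self, sq]
    simp only [hF_def]
    linarith
  have hEpos : 0 < F l₀ := lt_of_lt_of_le hQpos hE
  -- find l₁ ≥ l₀ with r l₁ = F l₀
  obtain ⟨b, hbE, hbl₀⟩ :=
    ((hrlim.eventually_ge_atTop (F l₀)).and (eventually_ge_atTop l₀)).exists
  have hrl₀E : r l₀ ≤ F l₀ := by linarith
  obtain ⟨l₁, hl₁mem, hrl₁⟩ := intermediate_value_Icc hbl₀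
    (hrc.mono (fun x hx => le_trans hl₀.le hx.1)) ⟨hrl₀E, hbE⟩
  have hl₀l₁ : l₀ ≤ l₁ := hl₁mem.1
  -- F is constant on [l₀, l₁]
  have hFcont : ContinuousOn F (Icc l₀ l₁) := fun x hx =>
    ((hFd x hx.1).continuousWithinAt).mono (fun y hy => le_trans hl₀.le hy.1)
  have hFder : ∀ x ∈ Ico l₀ l₁, HasDerivWithinAt F 0 (Ici x) x := fun x hx =>
    (hFd x hx.1).mono (Ici_subset_Ici.mpr (le_trans hl₀.le hx.1))
  have hconst := constant_of_has_deriv_right_zero hFcont hFder l₁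
    (right_mem_Icc.mpr hl₀l₁)
  -- compute w l₁ and conclude
  have hrl₁pos : 0 < r l₁ := hrpos l₁ (lt_of_lt_of_le hl₀ hl₀l₁)
  have hQE : Q^2 ≤ (r l₁)^2 := by
    have h1 : |Q| ≤ r l₁ := by rw [hrl₁]; exact hE
    nlinarith [sq_abs Q, abs_nonneg Q]
  have hwl₁ : w l₁ ≤ 0 := by
    have h1 : r l₁/2*(1 - w l₁) + Q^2/(2*r l₁) = r l₁ := by
      have h2 : F l₁ = r l₁ := by rw [hconst, ← hrl₁]
      rw [hF_def] at h2
      simp only [hm_def] at h2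
      exact h2
    have hrne : r l₁ ≠ 0 := hrl₁pos.ne'
    have h3 : w l₁ * (r l₁)^2 = Q^2 - (r l₁)^2 := by
      field_simp at h1
      linear_combination -h1
    nlinarith [pow_pos hrl₁pos 2]
  have hfinal := hcon l₁ hl₀l₁
  have he : (Kr l₁ * r l₁)^2 = (r l₁ * Kr l₁)^2 := by ring
  simp only [hw_def] at hwl₁
  linarith
end

section
/- Let 𝓡 > 0, and let 𝓜, Q, M be real numbers with 0 < 𝓜 ≤ 2𝓡, |Q| > 2𝓡, and M = 𝓜 + (Q² − 𝓜²)/(2𝓡). Then M > |Q|. (Hence a charged thin shell with positive proper mass whose radius violates the inequality 2𝓡 > |Q| is necessarily sub-extremal, M > |Q|, and thus surrounded by a horizon in any asymptotically flat extension.) -/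
/-- a charged thin shell with positive proper mass `0 < 𝓜 ≤ 2𝓡`
whose radius violates the size–charge inequality (`|Q| > 2𝓡`) is necessarily
sub-extremal: its total mass `M = 𝓜 + (Q² − 𝓜²)/(2𝓡)` satisfies `M > |Q|`. -/
theorem violating_shell_is_subextremal
    (R 𝓜 Q M : ℝ) (hR : 0 < R) (h𝓜pos : 0 < 𝓜) (h𝓜le : 𝓜 ≤ 2 * R)
    (hQ : |Q| > 2 * R) (hM : M = 𝓜 + (Q ^ 2 - 𝓜 ^ 2) / (2 * R)) :
    M > |Q| := by
  have hq2 : |Q| ^ 2 = Q ^ 2 := sq_abs Q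
  rw [hM, gt_iff_lt, ← sub_pos]
  have h2R : (0:ℝ) < 2 * R := by linarith
  have key : 𝓜 + (Q ^ 2 - 𝓜 ^ 2) / (2 * R) - |Q|
      = (|Q| - 𝓜) * (|Q| - 2 * R + 𝓜) / (2 * R) := by
    field_simp
    nlinarith [sq_abs Q]
  rw [key]
  apply div_pos _ h2R
  have : 𝓜 < |Q| := by linarith
  nlinarith
end

section
/- For every natural number n ≥ 1, define 𝓡ₙ = 1/n, Qₙ = 2/n − 1/n², 𝓜ₙ = 1/(2n³), and Mₙ = 𝓜ₙ + (Qₙ² − 𝓜ₙ²)/(2𝓡ₙ). Then Mₙ = 1/n³ + 2/n − 2/n² − 1/(8n⁵), and Mₙ − Qₙ = (8n² − 8n³ − 1)/(8n⁵) < 0; in particular each member of the sequence is super-extremal, Mₙ < Qₙ, so there are no trapped surfaces in its Reissner–Nordström exterior region. -/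
/-- for the sequence of thin shells with `𝓡ₙ = 1/n`,
`Qₙ = 2/n − 1/n²`, `𝓜ₙ = 1/(2n³)` and `Mₙ = 𝓜ₙ + (Qₙ² − 𝓜ₙ²)/(2𝓡ₙ)`, one has
`Mₙ = 1/n³ + 2/n − 2/n² − 1/(8n⁵)` and
`Mₙ − Qₙ = (8n² − 8n³ − 1)/(8n⁵) < 0`; in particular each member is
super-extremal, `Mₙ < Qₙ`. -/
theorem thin_shell_sequence_superextremal
    (n : ℕ) (hn : 1 ≤ n) (Rn Qn 𝓜n Mn : ℝ)
    (hR : Rn = 1 / n) (hQ : Qn = 2 / n - 1 / (n : ℝ) ^ 2)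
    (h𝓜 : 𝓜n = 1 / (2 * (n : ℝ) ^ 3))
    (hM : Mn = 𝓜n + (Qn ^ 2 - 𝓜n ^ 2) / (2 * Rn)) :
    Mn = 1 / (n : ℝ) ^ 3 + 2 / n - 2 / (n : ℝ) ^ 2 - 1 / (8 * (n : ℝ) ^ 5) ∧
    Mn - Qn = (8 * (n : ℝ) ^ 2 - 8 * (n : ℝ) ^ 3 - 1) / (8 * (n : ℝ) ^ 5) ∧
    Mn - Qn < 0 ∧ Mn < Qn := by
  have hn' : (1 : ℝ) ≤ (n : ℝ) := by exact_mod_cast hn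
  have hn0 : (n : ℝ) ≠ 0 := by positivity
  have h1 : Mn = 1 / (n : ℝ) ^ 3 + 2 / n - 2 / (n : ℝ) ^ 2 - 1 / (8 * (n : ℝ) ^ 5) := by
    subst hM hR hQ h𝓜; field_simp; ring
  have h2 : Mn - Qn = (8 * (n : ℝ) ^ 2 - 8 * (n : ℝ) ^ 3 - 1) / (8 * (n : ℝ) ^ 5) := by
    rw [h1, hQ]; field_simp; ring
  have h3 : Mn - Qn < 0 := by
    rw [h2]
    apply div_neg_of_neg_of_pos _ (by positivity)
    nlinarith [sq_nonneg ((n:ℝ) - 1), pow_le_pow_left₀ (by linarith : (0:ℝ) ≤ 1) hn' 3]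
  exact ⟨h1, h2, h3, by linarith⟩
end
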